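/- Under the LT-N diffusion model on any finite directed graph with admissible edge weights and autonomy factors, the expected positive influence function f^+ : 2^V → ℝ, defined by f^+(S) = E[|A^+(S)|], is monotone and submodular: f^+(S) ≤ f^+(T) whenever S ⊆ T ⊆ V, and f^+(S ∪ {v}) − f^+(S) ≥ f^+(T ∪ {v}) − f^+(T) for all S ⊆ T ⊆ V and v ∈ V \ T. -/

import Mathlib

open MeasureTheory
open scoped Classical

/-- The uniform distribution on `[0,1]`. -/
noncomputable def unif : Measure ℝ := volume.restrict (Set.Icc (0 : ℝ) 1)

/-- One step of the LT-N diffusion.  The state is the triple `(A, A⁺, A⁻)` of activated,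
positive and negative nodes; `h2` is the state at step `τ − 2` and `h1` the state at step
`τ − 1`.  A node `v ∉ A_{τ−1}` is activated when `Σ_{u ∈ A_{τ−1}} w(u,v) ≥ b_v`, where `b_v`
is its uniform threshold; conditional on activation it turns positive with probability
`q⁺(v) + (1 − q⁺(v) − q⁻(v)) · Σ_{u ∈ A⁺_{τ−1}∖A_{τ−2}} w(u,v) / Σ_{u ∈ A_{τ−1}∖A_{τ−2}} w(u,v)`,
realized through an independent uniform `u_v`. -/
noncomputable def ltnStep {V : Type*} [Fintype V] [DecidableEq V]
    (w : V → V → ℝ) (qp qm : V → ℝ) (b u : V → ℝ)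
    (h2 h1 : Finset V × Finset V × Finset V) : Finset V × Finset V × Finset V :=
  let newly : Finset V := Finset.univ.filter fun v =>
    v ∉ h1.1 ∧ b v ≤ ∑ x ∈ h1.1, w x v
  let pPos : V → ℝ := fun v =>
    qp v + (1 - (qp v + qm v)) *
      ((∑ x ∈ h1.2.1 \ h2.1, w x v) / (∑ x ∈ h1.1 \ h2.1, w x v))
  (h1.1 ∪ newly,
    h1.2.1 ∪ newly.filter (fun v => u v < pPos v),
    h1.2.2 ∪ newly.filter (fun v => ¬ u v < pPos v))

/-- The pair of consecutive states `((A_n, A⁺_n, A⁻_n), (A_{n+1}, A⁺_{n+1}, A⁻_{n+1}))` of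
the LT-N diffusion started from seed set `S`, with `A_0 = ∅` and `A_1 = A⁺_1 = S`. -/
noncomputable def ltnHistAux {V : Type*} [Fintype V] [DecidableEq V]
    (w : V → V → ℝ) (qp qm : V → ℝ) (S : Finset V) (b u : V → ℝ) :
    ℕ → (Finset V × Finset V × Finset V) × (Finset V × Finset V × Finset V)
  | 0 => ((∅, ∅, ∅), (S, S, ∅))
  | n + 1 =>
    let p := ltnHistAux w qp qm S b u n
    (p.2, ltnStep w qp qm b u p.1 p.2)

/-- The state `(A_n, A⁺_n, A⁻_n)` of the LT-N diffusion at step `n`. -/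
noncomputable def ltnHist {V : Type*} [Fintype V] [DecidableEq V]
    (w : V → V → ℝ) (qp qm : V → ℝ) (S : Finset V) (b u : V → ℝ) (n : ℕ) :
    Finset V × Finset V × Finset V :=
  (ltnHistAux w qp qm S b u n).1

/-- The final set `A⁺(S)` of positively activated nodes of the LT-N diffusion (the process
stabilizes after at most `|V ∖ S|` steps, hence by step `|V| + 1`). -/
noncomputable def ltnPosSet {V : Type*} [Fintype V] [DecidableEq V]
    (w : V → V → ℝ) (qp qm : V → ℝ) (S : Finset V) (b u : V → ℝ) : Finset V :=
  (ltnHist w qp qm S b u (Fintype.card V + 1)).2.1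

/-- The expected positive influence `f⁺(S) = E[|A⁺(S)|]` of the LT-N model, the expectation
being over the i.i.d. uniform thresholds and the independent uniform sign variables. -/
noncomputable def ltnPosInfluence {V : Type*} [Fintype V] [DecidableEq V]
    (w : V → V → ℝ) (qp qm : V → ℝ) (S : Finset V) : ℝ :=
  ∫ ω : (V → ℝ) × (V → ℝ),
      ((ltnPosSet w qp qm S ω.1 ω.2).card : ℝ)
    ∂((Measure.pi fun _ : V => unif).prod (Measure.pi fun _ : V => unif))

set_option linter.unusedSectionVars false

namespace LTN

open Finset

variable {V : Type*} [Fintype V] [DecidableEq V]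

/-- horizon -/
def NN (V : Type*) [Fintype V] : ℕ := Fintype.card V + 1

variable (w : V → V → ℝ) (qp qm : V → ℝ) (S : Finset V) (b u : V → ℝ)

noncomputable def st (t : ℕ) : Finset V × Finset V × Finset V :=
  (ltnHistAux w qp qm S b u t).1

lemma st_zero : st w qp qm S b u 0 = (∅, ∅, ∅) := rfl

lemma st_one : st w qp qm S b u 1 = (S, S, ∅) := rfl

lemma st_succ (t : ℕ) :
    st w qp qm S b u (t + 2)
      = ltnStep w qp qm b u (st w qp qm S b u t) (st w qp qm S b u (t + 1)) := rfl

lemma ltnStep_fst (h2 h1 : Finset V × Finset V × Finset V) :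
    (ltnStep w qp qm b u h2 h1).1
      = h1.1 ∪ (Finset.univ.filter fun v => v ∉ h1.1 ∧ b v ≤ ∑ x ∈ h1.1, w x v) := rfl

lemma ltnStep_pos (h2 h1 : Finset V × Finset V × Finset V) :
    (ltnStep w qp qm b u h2 h1).2.1
      = h1.2.1 ∪ (Finset.univ.filter fun v => v ∉ h1.1 ∧ b v ≤ ∑ x ∈ h1.1, w x v).filter
          (fun v => u v < qp v + (1 - (qp v + qm v)) *
            ((∑ x ∈ h1.2.1 \ h2.1, w x v) / (∑ x ∈ h1.1 \ h2.1, w x v))) := rfl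

lemma ltnStep_neg (h2 h1 : Finset V × Finset V × Finset V) :
    (ltnStep w qp qm b u h2 h1).2.2
      = h1.2.2 ∪ (Finset.univ.filter fun v => v ∉ h1.1 ∧ b v ≤ ∑ x ∈ h1.1, w x v).filter
          (fun v => ¬ u v < qp v + (1 - (qp v + qm v)) *
            ((∑ x ∈ h1.2.1 \ h2.1, w x v) / (∑ x ∈ h1.1 \ h2.1, w x v))) := rfl


lemma st_subset_succ (t : ℕ) :
    (st w qp qm S b u t).1 ⊆ (st w qp qm S b u (t+1)).1 ∧
    (st w qp qm S b u t).2.1 ⊆ (st w qp qm S b u (t+1)).2.1 ∧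
    (st w qp qm S b u t).2.2 ⊆ (st w qp qm S b u (t+1)).2.2 := by
  match t with
  | 0 => simp [st_zero]
  | Nat.succ t =>
      rw [st_succ, ltnStep_fst, ltnStep_pos, ltnStep_neg]
      exact ⟨subset_union_left, subset_union_left, subset_union_left⟩

lemma st_le {t t' : ℕ} (h : t ≤ t') :
    (st w qp qm S b u t).1 ⊆ (st w qp qm S b u t').1 ∧
    (st w qp qm S b u t).2.1 ⊆ (st w qp qm S b u t').2.1 ∧
    (st w qp qm S b u t).2.2 ⊆ (st w qp qm S b u t').2.2 := by
  induction t', h using Nat.le_induction with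
  | base => exact ⟨Finset.Subset.refl _, Finset.Subset.refl _, Finset.Subset.refl _⟩
  | succ n hn ih =>
      obtain ⟨h1, h2, h3⟩ := st_subset_succ w qp qm S b u n
      exact ⟨ih.1.trans h1, ih.2.1.trans h2, ih.2.2.trans h3⟩

lemma st_partition (t : ℕ) :
    (st w qp qm S b u t).2.1 ∪ (st w qp qm S b u t).2.2 = (st w qp qm S b u t).1 ∧
    Disjoint (st w qp qm S b u t).2.1 (st w qp qm S b u t).2.2 := by
  induction t using Nat.strong_induction_on with
  | _ t ih =>
    match t with
    | 0 => simp [st_zero]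
    | 1 => simp [st_one]
    | (t+2) =>
      obtain ⟨hu, hd⟩ := ih (t+1) (by omega)
      rw [st_succ, ltnStep_fst, ltnStep_pos, ltnStep_neg]
      set A := (st w qp qm S b u (t+1)).1
      set P := (st w qp qm S b u (t+1)).2.1
      set M := (st w qp qm S b u (t+1)).2.2
      set nw := Finset.univ.filter fun v => v ∉ A ∧ b v ≤ ∑ x ∈ A, w x v with hnw
      set p := fun v => u v < qp v + (1 - (qp v + qm v)) *
            ((∑ x ∈ P \ (st w qp qm S b u t).1, w x v) /
             (∑ x ∈ A \ (st w qp qm S b u t).1, w x v)) with hp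
      have hnwA : ∀ v ∈ nw, v ∉ A := by
        intro v hv
        exact (Finset.mem_filter.mp hv).2.1
      constructor
      · have : nw.filter p ∪ nw.filter (fun v => ¬ p v) = nw :=
          Finset.filter_union_filter_not_eq _ _
        calc (P ∪ nw.filter p) ∪ (M ∪ nw.filter fun v => ¬ p v)
            = (P ∪ M) ∪ (nw.filter p ∪ nw.filter fun v => ¬ p v) := by
              ac_rfl
          _ = A ∪ nw := by rw [hu, this]
      · rw [Finset.disjoint_left]
        intro a ha ha'
        rcases Finset.mem_union.mp ha with h1 | h1
        · rcases Finset.mem_union.mp ha' with h2 | h2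
          · exact (Finset.disjoint_left.mp hd) h1 h2
          · have : a ∈ A := by rw [← hu]; exact Finset.mem_union_left _ h1
            exact hnwA a (Finset.mem_filter.mp h2 |>.1 |> (fun h => Finset.filter_subset _ _ h2) |> fun _ => Finset.filter_subset _ _ h2) this
        · rcases Finset.mem_union.mp ha' with h2 | h2
          · have : a ∈ A := by rw [← hu]; exact Finset.mem_union_right _ h2
            exact hnwA a (Finset.filter_subset _ _ h1) this
          · have hpa := (Finset.mem_filter.mp h1).2
            exact (Finset.mem_filter.mp h2).2 hpa

lemma pos_subset (t : ℕ) : (st w qp qm S b u t).2.1 ⊆ (st w qp qm S b u t).1 := by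
  rw [← (st_partition w qp qm S b u t).1]; exact Finset.subset_union_left

lemma neg_subset (t : ℕ) : (st w qp qm S b u t).2.2 ⊆ (st w qp qm S b u t).1 := by
  rw [← (st_partition w qp qm S b u t).1]; exact Finset.subset_union_right

lemma pos_inter {t T : ℕ} (h : t ≤ T) :
    (st w qp qm S b u t).2.1 = (st w qp qm S b u t).1 ∩ (st w qp qm S b u T).2.1 := by
  apply Finset.Subset.antisymm
  · intro v hv
    exact Finset.mem_inter.mpr ⟨pos_subset w qp qm S b u t hv, (st_le w qp qm S b u h).2.1 hv⟩
  · intro v hv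
    obtain ⟨hvA, hvP⟩ := Finset.mem_inter.mp hv
    have := (st_partition w qp qm S b u t).1
    rw [← this] at hvA
    rcases Finset.mem_union.mp hvA with h1 | h1
    · exact h1
    · exfalso
      have : v ∈ (st w qp qm S b u T).2.2 := (st_le w qp qm S b u h).2.2 h1
      exact (Finset.disjoint_left.mp (st_partition w qp qm S b u T).2) hvP this

/-- activation time of `v` (`NN V + 1` if never activated). -/
noncomputable def phiT (v : V) : ℕ :=
  if v ∈ (st w qp qm S b u (NN V)).1 then sInf {t | v ∈ (st w qp qm S b u t).1}
  else NN V + 1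

/-- final sign of `v`. -/
noncomputable def phiS (v : V) : Bool := decide (v ∈ (st w qp qm S b u (NN V)).2.1)

lemma phiT_le (v : V) : phiT w qp qm S b u v ≤ NN V + 1 := by
  unfold phiT
  split_ifs with h
  · exact le_trans (Nat.sInf_le h) (by omega)
  · exact le_refl _

lemma mem_st_iff_phiT {t : ℕ} (ht : t ≤ NN V) (v : V) :
    v ∈ (st w qp qm S b u t).1 ↔ phiT w qp qm S b u v ≤ t := by
  constructor
  · intro hv
    have hN : v ∈ (st w qp qm S b u (NN V)).1 := (st_le w qp qm S b u ht).1 hv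
    unfold phiT
    rw [if_pos hN]
    exact Nat.sInf_le hv
  · intro hle
    by_cases hN : v ∈ (st w qp qm S b u (NN V)).1
    · unfold phiT at hle
      rw [if_pos hN] at hle
      have hne : {t | v ∈ (st w qp qm S b u t).1}.Nonempty := ⟨NN V, hN⟩
      have hmem := Nat.sInf_mem hne
      exact (st_le w qp qm S b u hle).1 hmem
    · exfalso
      unfold phiT at hle
      rw [if_neg hN] at hle
      omega

lemma phiT_pos (v : V) : 1 ≤ phiT w qp qm S b u v := by
  by_contra h
  push_neg at h
  have h0 : phiT w qp qm S b u v ≤ 0 := by omega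
  have := (mem_st_iff_phiT w qp qm S b u (Nat.zero_le _) v).mpr h0
  rw [st_zero] at this
  simp at this

lemma phiT_seed {v : V} (hv : v ∈ S) : phiT w qp qm S b u v = 1 := by
  have h1 : v ∈ (st w qp qm S b u 1).1 := by rw [st_one]; exact hv
  have := (mem_st_iff_phiT w qp qm S b u (by unfold NN; omega) v).mp h1
  have := phiT_pos w qp qm S b u v
  omega

lemma phiS_seed {v : V} (hv : v ∈ S) : phiS w qp qm S b u v = true := by
  unfold phiS
  simp only [decide_eq_true_eq]
  have h1 : v ∈ (st w qp qm S b u 1).2.1 := by rw [st_one]; exact hv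
  exact (st_le w qp qm S b u (by unfold NN; omega)).2.1 h1

/-! index-side reconstruction -/

noncomputable def iA (τ : V → ℕ) (t : ℕ) : Finset V := Finset.univ.filter fun x => τ x ≤ t

noncomputable def iP (τ : V → ℕ) (s : V → Bool) (t : ℕ) : Finset V :=
  Finset.univ.filter fun x => τ x ≤ t ∧ s x = true

noncomputable def iM (τ : V → ℕ) (s : V → Bool) (t : ℕ) : Finset V :=
  Finset.univ.filter fun x => τ x ≤ t ∧ ¬ s x = true

noncomputable def iW (τ : V → ℕ) (t : ℕ) (v : V) : ℝ := ∑ x ∈ iA τ t, w x v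

noncomputable def ipP (τ : V → ℕ) (s : V → Bool) (t : ℕ) (v : V) : ℝ :=
  qp v + (1 - (qp v + qm v)) *
    ((∑ x ∈ iP τ s (t-1) \ iA τ (t-2), w x v) / (∑ x ∈ iA τ (t-1) \ iA τ (t-2), w x v))

lemma iA_mono (τ : V → ℕ) {t t' : ℕ} (h : t ≤ t') : iA τ t ⊆ iA τ t' := by
  intro x hx
  simp only [iA, Finset.mem_filter, Finset.mem_univ, true_and] at hx ⊢
  omega

lemma iW_mono (hw0 : ∀ x v, 0 ≤ w x v) (τ : V → ℕ) {t t' : ℕ} (h : t ≤ t') (v : V) :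
    iW w τ t v ≤ iW w τ t' v :=
  Finset.sum_le_sum_of_subset_of_nonneg (iA_mono τ h) (fun x _ _ => hw0 x v)

lemma iW_nonneg (hw0 : ∀ x v, 0 ≤ w x v) (τ : V → ℕ) (t : ℕ) (v : V) : 0 ≤ iW w τ t v :=
  Finset.sum_nonneg (fun x _ => hw0 x v)

lemma iW_le_one (hw0 : ∀ x v, 0 ≤ w x v) (hw1 : ∀ v, ∑ x, w x v ≤ 1)
    (τ : V → ℕ) (t : ℕ) (v : V) : iW w τ t v ≤ 1 :=
  le_trans (Finset.sum_le_sum_of_subset_of_nonneg (Finset.subset_univ _)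
    (fun x _ _ => hw0 x v)) (hw1 v)

lemma ipP_mem (hw0 : ∀ x v, 0 ≤ w x v) (hqp : ∀ v, 0 ≤ qp v) (hqm : ∀ v, 0 ≤ qm v)
    (hr : ∀ v, qp v + qm v ≤ 1) (τ : V → ℕ) (s : V → Bool) (t : ℕ) (v : V) :
    0 ≤ ipP w qp qm τ s t v ∧ ipP w qp qm τ s t v ≤ 1 := by
  have hsub : iP τ s (t-1) \ iA τ (t-2) ⊆ iA τ (t-1) \ iA τ (t-2) := by
    apply Finset.sdiff_subset_sdiff _ (Finset.Subset.refl _)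
    intro x hx
    simp only [iP, iA, Finset.mem_filter, Finset.mem_univ, true_and] at hx ⊢
    exact hx.1
  set num := ∑ x ∈ iP τ s (t-1) \ iA τ (t-2), w x v with hnum
  set den := ∑ x ∈ iA τ (t-1) \ iA τ (t-2), w x v with hden
  have hnum0 : 0 ≤ num := Finset.sum_nonneg (fun x _ => hw0 x v)
  have hnd : num ≤ den := Finset.sum_le_sum_of_subset_of_nonneg hsub (fun x _ _ => hw0 x v)
  have hratio : 0 ≤ num / den ∧ num / den ≤ 1 := by
    rcases eq_or_lt_of_le (le_trans hnum0 hnd) with h | h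
    · have : den = 0 := h.symm
      rw [this]
      simp
    · exact ⟨div_nonneg hnum0 (le_of_lt h), (div_le_one h).mpr hnd⟩
  have h1r : 0 ≤ 1 - (qp v + qm v) := by linarith [hr v]
  unfold ipP
  constructor
  · have := mul_nonneg h1r hratio.1
    linarith [hqp v]
  · have hm : (1 - (qp v + qm v)) * (num / den) ≤ (1 - (qp v + qm v)) * 1 :=
      mul_le_mul_of_nonneg_left hratio.2 h1r
    have := hqm v
    linarith

/-- the per-node `b`-interval of index `(τ, s)`. -/
noncomputable def Iset (τ : V → ℕ) (s : V → Bool) (v : V) : Set ℝ :=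
  if v ∈ S then (if τ v = 1 ∧ s v = true then Set.univ else ∅)
  else if 2 ≤ τ v ∧ τ v ≤ NN V then
    (if τ v = 2 then Set.Iic (iW w τ 1 v) else Set.Ioc (iW w τ (τ v - 2) v) (iW w τ (τ v - 1) v))
  else if τ v = NN V + 1 then Set.Ioi (iW w τ (NN V - 1) v)
  else ∅

/-- the per-node `u`-interval of index `(τ, s)`. -/
noncomputable def Jset (τ : V → ℕ) (s : V → Bool) (v : V) : Set ℝ :=
  if v ∈ S then Set.univ
  else if 2 ≤ τ v ∧ τ v ≤ NN V then
    (if s v = true then Set.Iio (ipP w qp qm τ s (τ v) v) else Set.Ici (ipP w qp qm τ s (τ v) v))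
  else if τ v = NN V + 1 then (if s v = true then ∅ else Set.univ)
  else Set.univ

lemma mem_st_succ (t : ℕ) (v : V) :
    v ∈ (st w qp qm S b u (t+2)).1 ↔ v ∈ (st w qp qm S b u (t+1)).1 ∨
      (v ∉ (st w qp qm S b u (t+1)).1 ∧ b v ≤ ∑ x ∈ (st w qp qm S b u (t+1)).1, w x v) := by
  rw [st_succ, ltnStep_fst]
  simp [Finset.mem_union, Finset.mem_filter]

lemma mem_pos_succ (t : ℕ) (v : V) (hnew : v ∉ (st w qp qm S b u (t+1)).1)
    (hvA : v ∈ (st w qp qm S b u (t+2)).1) :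
    (v ∈ (st w qp qm S b u (t+2)).2.1 ↔
      u v < qp v + (1 - (qp v + qm v)) *
        ((∑ x ∈ (st w qp qm S b u (t+1)).2.1 \ (st w qp qm S b u t).1, w x v) /
         (∑ x ∈ (st w qp qm S b u (t+1)).1 \ (st w qp qm S b u t).1, w x v))) := by
  have hvnew : v ∈ Finset.univ.filter (fun v => v ∉ (st w qp qm S b u (t+1)).1 ∧
      b v ≤ ∑ x ∈ (st w qp qm S b u (t+1)).1, w x v) := by
    rw [st_succ, ltnStep_fst] at hvA
    rcases Finset.mem_union.mp hvA with h | h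
    · exact absurd h hnew
    · exact h
  rw [st_succ, ltnStep_pos]
  constructor
  · intro hv
    rcases Finset.mem_union.mp hv with h | h
    · exact absurd (pos_subset w qp qm S b u (t+1) h) hnew
    · exact (Finset.mem_filter.mp h).2
  · intro hv
    exact Finset.mem_union_right _ (Finset.mem_filter.mpr ⟨hvnew, hv⟩)

lemma st_eq_iA {t : ℕ} (ht : t ≤ NN V) :
    (st w qp qm S b u t).1 = iA (phiT w qp qm S b u) t := by
  ext v
  rw [mem_st_iff_phiT w qp qm S b u ht]
  simp [iA]

lemma st_eq_iP {t : ℕ} (ht : t ≤ NN V) :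
    (st w qp qm S b u t).2.1 = iP (phiT w qp qm S b u) (phiS w qp qm S b u) t := by
  ext v
  rw [pos_inter w qp qm S b u ht, Finset.mem_inter, mem_st_iff_phiT w qp qm S b u ht]
  simp [iP, phiS]

lemma phi_to_cond (hw0 : ∀ x v, 0 ≤ w x v) :
    ∀ v, b v ∈ Iset w S (phiT w qp qm S b u) (phiS w qp qm S b u) v ∧
         u v ∈ Jset w qp qm S (phiT w qp qm S b u) (phiS w qp qm S b u) v := by
  intro v
  set τ := phiT w qp qm S b u with hτdef
  set s := phiS w qp qm S b u with hsdef
  by_cases hv : v ∈ S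
  · constructor
    · unfold Iset
      rw [if_pos hv, if_pos ⟨phiT_seed w qp qm S b u hv, phiS_seed w qp qm S b u hv⟩]
      trivial
    · unfold Jset
      rw [if_pos hv]
      trivial
  · by_cases hvN : v ∈ (st w qp qm S b u (NN V)).1
    · -- activated at time m = τ v, 2 ≤ m ≤ NN V
      have hmN : τ v ≤ NN V := (mem_st_iff_phiT w qp qm S b u le_rfl v).mp hvN
      have hm2 : 2 ≤ τ v := by
        rcases Nat.lt_or_ge (τ v) 2 with h | h
        · exfalso
          have h1 : τ v ≤ 1 := by omega
          have : v ∈ (st w qp qm S b u 1).1 :=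
            (mem_st_iff_phiT w qp qm S b u (by unfold NN; omega) v).mpr h1
          rw [st_one] at this
          exact hv this
        · exact h
      obtain ⟨k, hk⟩ : ∃ k, τ v = k + 2 := ⟨τ v - 2, by omega⟩
      have hk1N : k + 1 ≤ NN V := by omega
      have hkN : k ≤ NN V := by omega
      have hvm : v ∈ (st w qp qm S b u (k+2)).1 :=
        (mem_st_iff_phiT w qp qm S b u (by omega) v).mpr (by rw [← hτdef]; omega)
      have hvm' : v ∉ (st w qp qm S b u (k+1)).1 := by
        rw [mem_st_iff_phiT w qp qm S b u hk1N v, ← hτdef]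
        omega
      have hble : b v ≤ iW w τ (k+1) v := by
        rcases (mem_st_succ w qp qm S b u k v).mp hvm with h | ⟨_, h⟩
        · exact absurd h hvm'
        · rw [st_eq_iA w qp qm S b u hk1N] at h
          exact h
      constructor
      · unfold Iset
        rw [if_neg hv, if_pos ⟨hm2, hmN⟩]
        by_cases h2 : τ v = 2
        · rw [if_pos h2]
          have : k = 0 := by omega
          subst this
          exact hble
        · rw [if_neg h2]
          have hk1 : 1 ≤ k := by omega
          obtain ⟨j, hj⟩ : ∃ j, k = j + 1 := ⟨k - 1, by omega⟩
          have hvj : v ∉ (st w qp qm S b u (j+1)).1 := by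
            intro hmem
            exact hvm' ((st_le w qp qm S b u (by omega)).1 hmem)
          have hlow : ¬ b v ≤ ∑ x ∈ (st w qp qm S b u (j+1)).1, w x v := by
            intro hc
            have : v ∈ (st w qp qm S b u (j+2)).1 :=
              (mem_st_succ w qp qm S b u j v).mpr (Or.inr ⟨hvj, hc⟩)
            rw [hj] at hvm'
            exact hvm' this
          rw [st_eq_iA w qp qm S b u (by omega)] at hlow
          push_neg at hlow
          constructor
          · have : τ v - 2 = j + 1 := by omega
            rw [this]
            exact hlow
          · have : τ v - 1 = k + 1 := by omega
            rw [this]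
            exact hble
      · unfold Jset
        rw [if_neg hv, if_pos ⟨hm2, hmN⟩]
        have hpos := mem_pos_succ w qp qm S b u k v hvm' hvm
        rw [st_eq_iP w qp qm S b u hk1N, st_eq_iA w qp qm S b u hk1N,
          st_eq_iA w qp qm S b u hkN, ← hτdef, ← hsdef] at hpos
        have hps : (s v = true) ↔ v ∈ (st w qp qm S b u (k+2)).2.1 := by
          rw [hsdef]
          unfold phiS
          rw [pos_inter w qp qm S b u (show k+2 ≤ NN V by omega)]
          simp only [decide_eq_true_eq]
          constructor
          · intro h
            exact Finset.mem_inter.mpr ⟨hvm, h⟩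
          · intro h
            exact (Finset.mem_inter.mp h).2
        have hipp : ipP w qp qm τ s (τ v) v =
            qp v + (1 - (qp v + qm v)) *
              ((∑ x ∈ iP τ s (k+1) \ iA τ k, w x v) / (∑ x ∈ iA τ (k+1) \ iA τ k, w x v)) := by
          unfold ipP
          rw [hk]
          rfl
        by_cases hs : s v = true
        · rw [if_pos hs]
          rw [hps] at hs
          rw [Set.mem_Iio, hipp]
          exact hpos.mp hs
        · rw [if_neg hs]
          rw [Set.mem_Ici, hipp]
          have : ¬ v ∈ (st w qp qm S b u (k+2)).2.1 := fun hc => hs (hps.mpr hc)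
          have := fun hc => this (hpos.mpr hc)
          linarith [not_lt.mp this]
    · -- never activated
      have hτtop : τ v = NN V + 1 := by
        rw [hτdef]
        unfold phiT
        rw [if_neg hvN]
      have hcard : 1 ≤ Fintype.card V := Fintype.card_pos_iff.mpr ⟨v⟩
      obtain ⟨k, hk⟩ : ∃ k, NN V = k + 2 := ⟨Fintype.card V - 1, by unfold NN; omega⟩
      have hstop : s v = false := by
        rw [hsdef]
        unfold phiS
        simp only [decide_eq_false_iff_not]
        intro hc
        exact hvN (pos_subset w qp qm S b u (NN V) hc)
      constructor
      · unfold Iset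
        rw [if_neg hv, if_neg (by omega), if_pos hτtop]
        have hvk1 : v ∉ (st w qp qm S b u (k+1)).1 := by
          intro hc
          exact hvN (by rw [hk]; exact (st_le w qp qm S b u (by omega)).1 hc)
        have hlow : ¬ b v ≤ ∑ x ∈ (st w qp qm S b u (k+1)).1, w x v := by
          intro hc
          apply hvN
          rw [hk]
          exact (mem_st_succ w qp qm S b u k v).mpr (Or.inr ⟨hvk1, hc⟩)
        rw [st_eq_iA w qp qm S b u (by omega)] at hlow
        push_neg at hlow
        have : NN V - 1 = k + 1 := by omega
        rw [this]
        exact hlow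
      · unfold Jset
        rw [if_neg hv, if_neg (by omega), if_pos hτtop, if_neg (by rw [hstop]; simp)]
        trivial

section Recon

variable (τ : V → ℕ) (s : V → Bool)

lemma cond_seed (h : ∀ v, b v ∈ Iset w S τ s v ∧ u v ∈ Jset w qp qm S τ s v)
    {v : V} (hv : v ∈ S) : τ v = 1 ∧ s v = true := by
  have := (h v).1
  unfold Iset at this
  rw [if_pos hv] at this
  by_contra hc
  rw [if_neg hc] at this
  exact this

lemma cond_nonseed (h : ∀ v, b v ∈ Iset w S τ s v ∧ u v ∈ Jset w qp qm S τ s v)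
    {v : V} (hv : v ∉ S) : (2 ≤ τ v ∧ τ v ≤ NN V) ∨ τ v = NN V + 1 := by
  have := (h v).1
  unfold Iset at this
  rw [if_neg hv] at this
  by_cases h1 : 2 ≤ τ v ∧ τ v ≤ NN V
  · exact Or.inl h1
  · rw [if_neg h1] at this
    by_cases h2 : τ v = NN V + 1
    · exact Or.inr h2
    · rw [if_neg h2] at this
      exact absurd this (Set.notMem_empty _)

lemma cond_top_sign (h : ∀ v, b v ∈ Iset w S τ s v ∧ u v ∈ Jset w qp qm S τ s v)
    {v : V} (hv : v ∉ S) (ht : τ v = NN V + 1) : s v = false := by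
  have := (h v).2
  unfold Jset at this
  rw [if_neg hv, if_neg (by omega), if_pos ht] at this
  by_contra hc
  rw [if_pos (by simpa using hc)] at this
  exact this

lemma cond_one (h : ∀ v, b v ∈ Iset w S τ s v ∧ u v ∈ Jset w qp qm S τ s v)
    (v : V) : 1 ≤ τ v := by
  by_cases hv : v ∈ S
  · exact le_of_eq (cond_seed w qp qm S b u τ s h hv).1.symm
  · rcases cond_nonseed w qp qm S b u τ s h hv with ⟨h1, _⟩ | h1 <;> omega

lemma recon (hw0 : ∀ x v, 0 ≤ w x v)
    (h : ∀ v, b v ∈ Iset w S τ s v ∧ u v ∈ Jset w qp qm S τ s v) :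
    ∀ t, t ≤ NN V →
      (st w qp qm S b u t).1 = iA τ t ∧ (st w qp qm S b u t).2.1 = iP τ s t := by
  intro t
  induction t using Nat.strong_induction_on with
  | _ t ih =>
    match t with
    | 0 =>
      intro _
      rw [st_zero]
      constructor
      · ext v
        simp only [iA, Finset.mem_filter, Finset.mem_univ, true_and]
        have := cond_one w qp qm S b u τ s h v
        simp only [Finset.notMem_empty, false_iff]
        omega
      · ext v
        simp only [iP, Finset.mem_filter, Finset.mem_univ, true_and]
        have := cond_one w qp qm S b u τ s h v
        simp only [Finset.notMem_empty, false_iff]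
        intro hc
        omega
    | 1 =>
      intro _
      rw [st_one]
      have hiff : ∀ v : V, v ∈ S ↔ τ v = 1 := by
        intro v
        constructor
        · intro hv
          exact (cond_seed w qp qm S b u τ s h hv).1
        · intro hv
          by_contra hc
          rcases cond_nonseed w qp qm S b u τ s h hc with ⟨h1, _⟩ | h1 <;> omega
      constructor
      · ext v
        simp only [iA, Finset.mem_filter, Finset.mem_univ, true_and]
        rw [hiff v]
        have := cond_one w qp qm S b u τ s h v
        omega
      · ext v
        simp only [iP, Finset.mem_filter, Finset.mem_univ, true_and]
        constructor
        · intro hv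
          obtain ⟨h1, h2⟩ := cond_seed w qp qm S b u τ s h hv
          exact ⟨le_of_eq h1, h2⟩
        · intro ⟨h1, _⟩
          rw [hiff v]
          have := cond_one w qp qm S b u τ s h v
          omega
    | (t+2) =>
      intro htN
      obtain ⟨ihA1, ihP1⟩ := ih (t+1) (by omega) (by omega)
      obtain ⟨ihA0, _⟩ := ih t (by omega) (by omega)
      -- the newly activated set is exactly {τ = t+2}
      have hkey : (Finset.univ.filter fun v => v ∉ (st w qp qm S b u (t+1)).1 ∧
            b v ≤ ∑ x ∈ (st w qp qm S b u (t+1)).1, w x v)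
          = Finset.univ.filter (fun v => τ v = t + 2) := by
        ext v
        simp only [Finset.mem_filter, Finset.mem_univ, true_and]
        rw [ihA1]
        have hmem : v ∈ iA τ (t+1) ↔ τ v ≤ t + 1 := by
          simp [iA]
        constructor
        · rintro ⟨hv1, hv2⟩
          rw [hmem] at hv1
          have hv2' : b v ≤ iW w τ (t+1) v := hv2
          have hvS : v ∉ S := by
            intro hc
            have := (cond_seed w qp qm S b u τ s h hc).1
            omega
          have hIv := (h v).1
          unfold Iset at hIv
          rw [if_neg hvS] at hIv
          rcases cond_nonseed w qp qm S b u τ s h hvS with ⟨h1, h2⟩ | h1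
          · rw [if_pos ⟨h1, h2⟩] at hIv
            by_cases h3 : τ v = 2
            · rw [if_pos h3] at hIv
              omega
            · rw [if_neg h3] at hIv
              obtain ⟨hlo, _⟩ := hIv
              by_contra hc
              have hle : t + 1 ≤ τ v - 2 := by omega
              have := iW_mono w hw0 τ hle v
              have : b v ≤ iW w τ (τ v - 2) v := le_trans hv2 this
              linarith
          · rw [if_neg (by omega), if_pos h1] at hIv
            exfalso
            have hle : t + 1 ≤ NN V - 1 := by omega
            have := iW_mono w hw0 τ hle v
            rw [Set.mem_Ioi] at hIv
            have : iW w τ (t+1) v < b v := lt_of_le_of_lt this hIv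
            linarith
        · intro hτv
          have hvS : v ∉ S := by
            intro hc
            have := (cond_seed w qp qm S b u τ s h hc).1
            omega
          have hIv := (h v).1
          unfold Iset at hIv
          rw [if_neg hvS, if_pos (by omega : 2 ≤ τ v ∧ τ v ≤ NN V)] at hIv
          refine ⟨by rw [hmem]; omega, ?_⟩
          by_cases h3 : τ v = 2
          · rw [if_pos h3] at hIv
            have ht0 : t = 0 := by omega
            subst ht0
            exact hIv
          · rw [if_neg h3] at hIv
            have : τ v - 1 = t + 1 := by omega
            rw [← this]
            exact hIv.2
      constructor
      · rw [st_succ, ltnStep_fst, hkey, ihA1]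
        ext v
        simp only [iA, Finset.mem_union, Finset.mem_filter, Finset.mem_univ, true_and]
        omega
      · rw [st_succ, ltnStep_pos, hkey, ihP1, ihA1, ihA0]
        have hflt : (Finset.univ.filter fun v => τ v = t + 2).filter
              (fun v => u v < qp v + (1 - (qp v + qm v)) *
                ((∑ x ∈ iP τ s (t+1) \ (iA τ t), w x v) / (∑ x ∈ iA τ (t+1) \ (iA τ t), w x v)))
            = Finset.univ.filter (fun v => τ v = t + 2 ∧ s v = true) := by
          ext v
          simp only [Finset.mem_filter, Finset.mem_univ, true_and]
          constructor
          · rintro ⟨hτv, hu⟩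
            refine ⟨hτv, ?_⟩
            by_contra hns
            have hvS : v ∉ S := by
              intro hc
              have := (cond_seed w qp qm S b u τ s h hc).1
              omega
            have hJv := (h v).2
            unfold Jset at hJv
            rw [if_neg hvS, if_pos (by omega : 2 ≤ τ v ∧ τ v ≤ NN V), if_neg hns] at hJv
            rw [Set.mem_Ici] at hJv
            have : ipP w qp qm τ s (τ v) v = qp v + (1 - (qp v + qm v)) *
                ((∑ x ∈ iP τ s (t+1) \ (iA τ t), w x v) /
                 (∑ x ∈ iA τ (t+1) \ (iA τ t), w x v)) := by
              unfold ipP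
              rw [hτv]
              rfl
            rw [this] at hJv
            linarith
          · rintro ⟨hτv, hs⟩
            refine ⟨hτv, ?_⟩
            have hvS : v ∉ S := by
              intro hc
              have := (cond_seed w qp qm S b u τ s h hc).1
              omega
            have hJv := (h v).2
            unfold Jset at hJv
            rw [if_neg hvS, if_pos (by omega : 2 ≤ τ v ∧ τ v ≤ NN V), if_pos hs] at hJv
            rw [Set.mem_Iio] at hJv
            have : ipP w qp qm τ s (τ v) v = qp v + (1 - (qp v + qm v)) *
                ((∑ x ∈ iP τ s (t+1) \ (iA τ t), w x v) /
                 (∑ x ∈ iA τ (t+1) \ (iA τ t), w x v)) := by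
              unfold ipP
              rw [hτv]
              rfl
            rw [this] at hJv
            exact hJv
        rw [hflt]
        ext v
        simp only [iP, Finset.mem_union, Finset.mem_filter, Finset.mem_univ, true_and]
        constructor
        · rintro (⟨h1, h2⟩ | ⟨h1, h2⟩)
          · exact ⟨by omega, h2⟩
          · exact ⟨by omega, h2⟩
        · rintro ⟨h1, h2⟩
          rcases Nat.lt_or_ge (τ v) (t+2) with hlt | hge
          · exact Or.inl ⟨by omega, h2⟩
          · exact Or.inr ⟨by omega, h2⟩

lemma cond_to_phi (hw0 : ∀ x v, 0 ≤ w x v)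
    (h : ∀ v, b v ∈ Iset w S τ s v ∧ u v ∈ Jset w qp qm S τ s v) :
    (∀ v, phiT w qp qm S b u v = τ v) ∧ (∀ v, phiS w qp qm S b u v = s v) := by
  have hrec := recon w qp qm S b u τ s hw0 h
  have hAt : ∀ t, t ≤ NN V → ∀ v : V, (v ∈ (st w qp qm S b u t).1 ↔ τ v ≤ t) := by
    intro t ht v
    rw [(hrec t ht).1]
    simp [iA]
  have hτ : ∀ v, phiT w qp qm S b u v = τ v := by
    intro v
    by_cases hτN : τ v ≤ NN V
    · have h1 : v ∈ (st w qp qm S b u (τ v)).1 := (hAt (τ v) hτN v).mpr le_rfl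
      have h2 : phiT w qp qm S b u v ≤ τ v := (mem_st_iff_phiT w qp qm S b u hτN v).mp h1
      have h3 : v ∈ (st w qp qm S b u (phiT w qp qm S b u v)).1 :=
        (mem_st_iff_phiT w qp qm S b u (le_trans h2 hτN) v).mpr le_rfl
      have h4 : τ v ≤ phiT w qp qm S b u v := (hAt _ (le_trans h2 hτN) v).mp h3
      omega
    · have hNN : 1 ≤ NN V := by unfold NN; omega
      have hτtop : τ v = NN V + 1 := by
        by_cases hv : v ∈ S
        · exact absurd (cond_seed w qp qm S b u τ s h hv).1 (by omega)
        · rcases cond_nonseed w qp qm S b u τ s h hv with ⟨_, h1⟩ | h1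
          · omega
          · exact h1
      have : v ∉ (st w qp qm S b u (NN V)).1 := by
        rw [hAt (NN V) le_rfl v]
        omega
      unfold phiT
      rw [if_neg this, hτtop]
  have hs : ∀ v, phiS w qp qm S b u v = s v := by
    intro v
    unfold phiS
    have hiPN := (hrec (NN V) le_rfl).2
    by_cases hmem : v ∈ (st w qp qm S b u (NN V)).2.1
    · have hmem' := hmem
      rw [hiPN] at hmem'
      simp only [iP, Finset.mem_filter, Finset.mem_univ, true_and] at hmem'
      simp [hmem, hmem'.2]
    · have hno : ¬ (τ v ≤ NN V ∧ s v = true) := by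
        rw [hiPN] at hmem
        simpa [iP] using hmem
      have hsv : s v = false := by
        rcases Bool.eq_false_or_eq_true (s v) with hb | hb
        · exfalso
          by_cases hτN : τ v ≤ NN V
          · exact hno ⟨hτN, hb⟩
          · have hNN : 1 ≤ NN V := by unfold NN; omega
            have hτtop : τ v = NN V + 1 := by
              by_cases hv : v ∈ S
              · have := (cond_seed w qp qm S b u τ s h hv).1
                omega
              · rcases cond_nonseed w qp qm S b u τ s h hv with ⟨_, h1⟩ | h1
                · omega
                · exact h1
            have hv : v ∉ S := by
              intro hc
              have := (cond_seed w qp qm S b u τ s h hc).1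
              omega
            have := cond_top_sign w qp qm S b u τ s h hv hτtop
            rw [hb] at this
            simp at this
        · exact hb
      have hmem2 : v ∉ (st w qp qm S b u (NN V)).2.1 := by
        rw [hiPN] at hmem ⊢
        exact hmem
      simp [hmem2, hsv]
  exact ⟨hτ, hs⟩

/-- MAIN characterization: the fibre of `(phiT, phiS)` over `(τ, s)` is exactly the box. -/
lemma phi_eq_iff (hw0 : ∀ x v, 0 ≤ w x v) :
    ((∀ v, phiT w qp qm S b u v = τ v) ∧ (∀ v, phiS w qp qm S b u v = s v)) ↔
      (∀ v, b v ∈ Iset w S τ s v ∧ u v ∈ Jset w qp qm S τ s v) := by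
  constructor
  · rintro ⟨h1, h2⟩
    have hτ : phiT w qp qm S b u = τ := funext h1
    have hs : phiS w qp qm S b u = s := funext h2
    rw [← hτ, ← hs]
    exact phi_to_cond w qp qm S b u hw0
  · exact cond_to_phi w qp qm S b u τ s hw0

end Recon

/-! measure of intervals under `unif` -/

instance : IsProbabilityMeasure unif := by
  constructor
  rw [unif, Measure.restrict_apply MeasurableSet.univ, Set.univ_inter, Real.volume_Icc]
  norm_num

lemma unif_apply (A : Set ℝ) (hA : MeasurableSet A) : unif A = volume (A ∩ Set.Icc 0 1) := by
  rw [unif, Measure.restrict_apply hA]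

lemma unif_univ : unif (Set.univ : Set ℝ) = 1 := measure_univ

lemma unif_empty : unif (∅ : Set ℝ) = 0 := measure_empty

lemma unif_Iic {c : ℝ} (h0 : 0 ≤ c) (h1 : c ≤ 1) : unif (Set.Iic c) = ENNReal.ofReal c := by
  rw [unif_apply _ measurableSet_Iic]
  have : Set.Iic c ∩ Set.Icc 0 1 = Set.Icc 0 c := by
    ext x
    simp only [Set.mem_inter_iff, Set.mem_Iic, Set.mem_Icc]
    constructor
    · rintro ⟨hx, hx0, _⟩
      exact ⟨hx0, hx⟩
    · rintro ⟨hx0, hx⟩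
      exact ⟨hx, hx0, le_trans hx h1⟩
  rw [this, Real.volume_Icc]
  norm_num

lemma unif_Ioc {a c : ℝ} (h0 : 0 ≤ a) (h1 : c ≤ 1) :
    unif (Set.Ioc a c) = ENNReal.ofReal (c - a) := by
  rw [unif_apply _ measurableSet_Ioc]
  have : Set.Ioc a c ∩ Set.Icc 0 1 = Set.Ioc a c := by
    apply Set.inter_eq_self_of_subset_left
    intro x hx
    rw [Set.mem_Ioc] at hx
    exact ⟨le_trans h0 (le_of_lt hx.1), le_trans hx.2 h1⟩
  rw [this, Real.volume_Ioc]

lemma unif_Ioi {a : ℝ} (h0 : 0 ≤ a) : unif (Set.Ioi a) = ENNReal.ofReal (1 - a) := by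
  rw [unif_apply _ measurableSet_Ioi]
  have : Set.Ioi a ∩ Set.Icc 0 1 = Set.Ioc a 1 := by
    ext x
    simp only [Set.mem_inter_iff, Set.mem_Ioi, Set.mem_Icc, Set.mem_Ioc]
    constructor
    · rintro ⟨hx, _, hx1⟩
      exact ⟨hx, hx1⟩
    · rintro ⟨hx, hx1⟩
      exact ⟨hx, le_trans h0 (le_of_lt hx), hx1⟩
  rw [this, Real.volume_Ioc]

lemma unif_Iio {p : ℝ} (h1 : p ≤ 1) : unif (Set.Iio p) = ENNReal.ofReal p := by
  rw [unif_apply _ measurableSet_Iio]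
  have : Set.Iio p ∩ Set.Icc 0 1 = Set.Ico 0 p := by
    ext x
    simp only [Set.mem_inter_iff, Set.mem_Iio, Set.mem_Icc, Set.mem_Ico]
    constructor
    · rintro ⟨hx, hx0, _⟩
      exact ⟨hx0, hx⟩
    · rintro ⟨hx0, hx⟩
      exact ⟨hx, hx0, le_trans (le_of_lt hx) h1⟩
  rw [this, Real.volume_Ico]
  norm_num

lemma unif_Ici {p : ℝ} (h0 : 0 ≤ p) : unif (Set.Ici p) = ENNReal.ofReal (1 - p) := by
  rw [unif_apply _ measurableSet_Ici]
  have : Set.Ici p ∩ Set.Icc 0 1 = Set.Icc p 1 := by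
    ext x
    simp only [Set.mem_inter_iff, Set.mem_Ici, Set.mem_Icc]
    constructor
    · rintro ⟨hx, _, hx1⟩
      exact ⟨hx, hx1⟩
    · rintro ⟨hx, hx1⟩
      exact ⟨hx, le_trans h0 hx, hx1⟩
  rw [this, Real.volume_Icc]

namespace LTN2
end LTN2

/-! factors -/

noncomputable def bFac (τ : V → ℕ) (s : V → Bool) (v : V) : ℝ :=
  if v ∈ S then (if τ v = 1 ∧ s v = true then 1 else 0)
  else if 2 ≤ τ v ∧ τ v ≤ NN V then
    (if τ v = 2 then iW w τ 1 v else iW w τ (τ v - 1) v - iW w τ (τ v - 2) v)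
  else if τ v = NN V + 1 then 1 - iW w τ (NN V - 1) v
  else 0

noncomputable def uFac (τ : V → ℕ) (s : V → Bool) (v : V) : ℝ :=
  if v ∈ S then 1
  else if 2 ≤ τ v ∧ τ v ≤ NN V then
    (if s v = true then ipP w qp qm τ s (τ v) v else 1 - ipP w qp qm τ s (τ v) v)
  else if τ v = NN V + 1 then (if s v = true then 0 else 1)
  else 1

lemma bFac_nonneg (hw0 : ∀ x v, 0 ≤ w x v) (hw1 : ∀ v, ∑ x, w x v ≤ 1)
    (τ : V → ℕ) (s : V → Bool) (v : V) : 0 ≤ bFac w S τ s v := by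
  unfold bFac
  split_ifs with h1 h2 h3 h4 h5
  · norm_num
  · norm_num
  · exact iW_nonneg w hw0 τ 1 v
  · have : iW w τ (τ v - 2) v ≤ iW w τ (τ v - 1) v := iW_mono w hw0 τ (by omega) v
    linarith
  · have := iW_le_one w hw0 hw1 τ (NN V - 1) v
    linarith
  · exact le_refl 0

lemma uFac_nonneg (hw0 : ∀ x v, 0 ≤ w x v) (hqp : ∀ v, 0 ≤ qp v) (hqm : ∀ v, 0 ≤ qm v)
    (hr : ∀ v, qp v + qm v ≤ 1) (τ : V → ℕ) (s : V → Bool) (v : V) :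
    0 ≤ uFac w qp qm S τ s v := by
  unfold uFac
  obtain ⟨hp0, hp1⟩ := ipP_mem w qp qm hw0 hqp hqm hr τ s (τ v) v
  split_ifs <;> linarith

lemma measurable_Iset (τ : V → ℕ) (s : V → Bool) (v : V) :
    MeasurableSet (Iset w S τ s v) := by
  unfold Iset
  split_ifs
  · exact MeasurableSet.univ
  · exact MeasurableSet.empty
  · exact measurableSet_Iic
  · exact measurableSet_Ioc
  · exact measurableSet_Ioi
  · exact MeasurableSet.empty

lemma measurable_Jset (τ : V → ℕ) (s : V → Bool) (v : V) :
    MeasurableSet (Jset w qp qm S τ s v) := by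
  unfold Jset
  split_ifs
  · exact MeasurableSet.univ
  · exact measurableSet_Iio
  · exact measurableSet_Ici
  · exact MeasurableSet.empty
  · exact MeasurableSet.univ
  · exact MeasurableSet.univ

lemma unif_Iset (hw0 : ∀ x v, 0 ≤ w x v) (hw1 : ∀ v, ∑ x, w x v ≤ 1)
    (τ : V → ℕ) (s : V → Bool) (v : V) :
    unif (Iset w S τ s v) = ENNReal.ofReal (bFac w S τ s v) := by
  unfold Iset bFac
  split_ifs
  · rw [unif_univ]
    norm_num
  · rw [unif_empty]
    norm_num
  · exact unif_Iic (iW_nonneg w hw0 τ 1 v) (iW_le_one w hw0 hw1 τ 1 v)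
  · exact unif_Ioc (iW_nonneg w hw0 τ _ v) (iW_le_one w hw0 hw1 τ _ v)
  · exact unif_Ioi (iW_nonneg w hw0 τ _ v)
  · rw [unif_empty]
    norm_num

lemma unif_Jset (hw0 : ∀ x v, 0 ≤ w x v) (hqp : ∀ v, 0 ≤ qp v) (hqm : ∀ v, 0 ≤ qm v)
    (hr : ∀ v, qp v + qm v ≤ 1) (τ : V → ℕ) (s : V → Bool) (v : V) :
    unif (Jset w qp qm S τ s v) = ENNReal.ofReal (uFac w qp qm S τ s v) := by
  obtain ⟨hp0, hp1⟩ := ipP_mem w qp qm hw0 hqp hqm hr τ s (τ v) v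
  unfold Jset uFac
  split_ifs
  · rw [unif_univ]
    norm_num
  · exact unif_Iio hp1
  · exact unif_Ici hp0
  · rw [unif_empty]
    norm_num
  · rw [unif_univ]
    norm_num
  · rw [unif_univ]
    norm_num

/-! the integral as a finite sum over indices -/

variable (Vx : Type*)

abbrev Idx (V : Type*) [Fintype V] : Type _ := (V → Fin (NN V + 2)) × (V → Bool)

def idxT (i : Idx V) : V → ℕ := fun v => (i.1 v : ℕ)

noncomputable def Box (i : Idx V) : Set ((V → ℝ) × (V → ℝ)) :=
  (Set.univ.pi fun v => Iset w S (idxT i) i.2 v) ×ˢ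
    (Set.univ.pi fun v => Jset w qp qm S (idxT i) i.2 v)

noncomputable def phiFin : Idx V :=
  (fun v => ⟨phiT w qp qm S b u v, by have := phiT_le w qp qm S b u v; omega⟩,
   phiS w qp qm S b u)

lemma mem_Box_iff (i : Idx V) (ω : (V → ℝ) × (V → ℝ)) :
    ω ∈ Box w qp qm S i ↔
      ∀ v, ω.1 v ∈ Iset w S (idxT i) i.2 v ∧ ω.2 v ∈ Jset w qp qm S (idxT i) i.2 v := by
  unfold Box
  rw [Set.mem_prod, Set.mem_univ_pi, Set.mem_univ_pi]
  constructor
  · rintro ⟨h1, h2⟩ v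
    exact ⟨h1 v, h2 v⟩
  · intro h
    exact ⟨fun v => (h v).1, fun v => (h v).2⟩

lemma mem_Box_iff_phiFin (hw0 : ∀ x v, 0 ≤ w x v) (i : Idx V) (ω : (V → ℝ) × (V → ℝ)) :
    ω ∈ Box w qp qm S i ↔ phiFin w qp qm S ω.1 ω.2 = i := by
  rw [mem_Box_iff, ← phi_eq_iff w qp qm S ω.1 ω.2 (idxT i) i.2 hw0]
  unfold phiFin idxT
  constructor
  · rintro ⟨h1, h2⟩
    refine Prod.ext ?_ (funext h2)
    funext v
    exact Fin.ext (h1 v)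
  · intro h
    rw [← h]
    exact ⟨fun v => rfl, fun v => rfl⟩

lemma measurable_Box (i : Idx V) : MeasurableSet (Box w qp qm S i) :=
  MeasurableSet.prod
    (MeasurableSet.univ_pi fun v => measurable_Iset w S _ _ v)
    (MeasurableSet.univ_pi fun v => measurable_Jset w qp qm S _ _ v)

lemma influence_eq_idx_sum (hw0 : ∀ x v, 0 ≤ w x v) (hw1 : ∀ v, ∑ x, w x v ≤ 1)
    (hqp : ∀ v, 0 ≤ qp v) (hqm : ∀ v, 0 ≤ qm v) (hr : ∀ v, qp v + qm v ≤ 1) :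
    ltnPosInfluence w qp qm S
      = ∑ i : Idx V,
          (∏ v, bFac w S (idxT i) i.2 v * uFac w qp qm S (idxT i) i.2 v) *
            ((Finset.univ.filter fun v => i.2 v = true).card : ℝ) := by
  have hfun : (fun ω : (V → ℝ) × (V → ℝ) => ((ltnPosSet w qp qm S ω.1 ω.2).card : ℝ))
      = fun ω => ∑ i : Idx V, (Box w qp qm S i).indicator
          (fun _ => ((Finset.univ.filter fun v => i.2 v = true).card : ℝ)) ω := by
    funext ω
    rw [Finset.sum_eq_single (phiFin w qp qm S ω.1 ω.2)]
    · have hω : ω ∈ Box w qp qm S (phiFin w qp qm S ω.1 ω.2) :=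
        (mem_Box_iff_phiFin w qp qm S hw0 _ ω).mpr rfl
      rw [Set.indicator_of_mem hω]
      congr 1
      have : ltnPosSet w qp qm S ω.1 ω.2 = (st w qp qm S ω.1 ω.2 (NN V)).2.1 := rfl
      rw [this]
      have : (Finset.univ.filter fun v => (phiFin w qp qm S ω.1 ω.2).2 v = true)
          = (st w qp qm S ω.1 ω.2 (NN V)).2.1 := by
        ext v
        simp [phiFin, phiS]
      rw [this]
    · intro i _ hne
      apply Set.indicator_of_notMem
      intro hc
      exact hne ((mem_Box_iff_phiFin w qp qm S hw0 i ω).mp hc).symm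
    · intro hc
      exact absurd (Finset.mem_univ _) hc
  unfold ltnPosInfluence
  rw [hfun]
  rw [MeasureTheory.integral_finset_sum]
  swap
  · intro i _
    exact (integrable_const _).indicator (measurable_Box w qp qm S i)
  apply Finset.sum_congr rfl
  intro i _
  rw [MeasureTheory.integral_indicator_const _ (measurable_Box w qp qm S i)]
  rw [smul_eq_mul]
  congr 1
  unfold Box
  rw [MeasureTheory.measureReal_def, MeasureTheory.Measure.prod_prod, MeasureTheory.Measure.pi_pi, MeasureTheory.Measure.pi_pi]
  rw [ENNReal.toReal_mul, ENNReal.toReal_prod, ENNReal.toReal_prod]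
  rw [← Finset.prod_mul_distrib]
  apply Finset.prod_congr rfl
  intro v _
  rw [unif_Iset w S hw0 hw1, unif_Jset w qp qm S hw0 hqp hqm hr,
    ENNReal.toReal_ofReal (bFac_nonneg w S hw0 hw1 _ _ v),
    ENNReal.toReal_ofReal (uFac_nonneg w qp qm S hw0 hqp hqm hr _ _ v)]

/-! configuration side -/

noncomputable def pw (v : V) : Option V → ℝ
  | none => 1 - ∑ x, w x v
  | some x => w x v

noncomputable def pq (v : V) : Option Bool → ℝ
  | none => 1 - (qp v + qm v)
  | some true => qp v
  | some false => qm v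

def Loc (τ : V → ℕ) (s : V → Bool) (v : V) (o : Option V) (c : Option Bool) : Prop :=
  if v ∈ S then τ v = 1 ∧ s v = true
  else if 2 ≤ τ v ∧ τ v ≤ NN V then
    ∃ x, o = some x ∧ τ x = τ v - 1 ∧
      (s v = true ↔ (c = some true ∨ (c = none ∧ s x = true)))
  else if τ v = NN V + 1 then
    s v = false ∧ (o = none ∨ ∃ x, o = some x ∧ NN V ≤ τ x)
  else False

def iOK (τ : V → ℕ) (s : V → Bool) : Prop :=
  (∀ v, 1 ≤ τ v) ∧ (∀ v, (τ v = 1 ↔ v ∈ S)) ∧ (∀ v ∈ S, s v = true)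

lemma sum_pw (hw1 : ∀ v, ∑ x, w x v ≤ 1) (v : V) : ∑ o : Option V, pw w v o = 1 := by
  rw [Fintype.sum_option]
  simp [pw]

lemma sum_pq (v : V) : ∑ c : Option Bool, pq qp qm v c = 1 := by
  rw [Fintype.sum_option, Fintype.sum_bool]
  simp [pq]

lemma sdiffA_eq_filter (τ : V → ℕ) {t : ℕ} (ht : 2 ≤ t) :
    iA τ (t-1) \ iA τ (t-2) = Finset.univ.filter (fun x => τ x = t - 1) := by
  ext x
  simp only [iA, Finset.mem_sdiff, Finset.mem_filter, Finset.mem_univ, true_and]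
  omega

lemma sdiffP_eq_filter (τ : V → ℕ) (s : V → Bool) {t : ℕ} (ht : 2 ≤ t) :
    iP τ s (t-1) \ iA τ (t-2) = Finset.univ.filter (fun x => τ x = t - 1 ∧ s x = true) := by
  ext x
  simp only [iP, iA, Finset.mem_sdiff, Finset.mem_filter, Finset.mem_univ, true_and]
  constructor
  · rintro ⟨⟨h1, h2⟩, h3⟩
    exact ⟨by omega, h2⟩
  · rintro ⟨h1, h2⟩
    exact ⟨⟨by omega, h2⟩, by omega⟩

/-- the per node factor equals the per node configuration sum : the heart of the
live-edge equivalence. -/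
lemma node_sum (hw0 : ∀ x v, 0 ≤ w x v) (hw1 : ∀ v, ∑ x, w x v ≤ 1)
    (τ : V → ℕ) (s : V → Bool) (hOK : iOK S τ s) (v : V) :
    bFac w S τ s v * uFac w qp qm S τ s v
      = ∑ oc : Option V × Option Bool,
          pw w v oc.1 * pq qp qm v oc.2 * (if Loc S τ s v oc.1 oc.2 then 1 else 0) := by
  obtain ⟨hOK1, hOK2, hOK3⟩ := hOK
  rw [Fintype.sum_prod_type]
  by_cases hv : v ∈ S
  · -- seed node
    have hLoc : ∀ (o : Option V) (c : Option Bool), Loc S τ s v o c := by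
      intro o c
      unfold Loc
      rw [if_pos hv]
      exact ⟨(hOK2 v).mpr hv, hOK3 v hv⟩
    have : ∀ o : Option V, ∑ c : Option Bool,
        pw w v o * pq qp qm v c * (if Loc S τ s v o c then 1 else 0)
          = pw w v o := by
      intro o
      have : ∀ c : Option Bool, pw w v o * pq qp qm v c * (if Loc S τ s v o c then 1 else 0)
          = pw w v o * pq qp qm v c := by
        intro c
        rw [if_pos (hLoc o c), mul_one]
      rw [Finset.sum_congr rfl (fun c _ => this c), ← Finset.mul_sum, sum_pq, mul_one]
    rw [Finset.sum_congr rfl (fun o _ => this o), sum_pw w hw1]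
    unfold bFac uFac
    rw [if_pos hv, if_pos hv, if_pos ⟨(hOK2 v).mpr hv, hOK3 v hv⟩, one_mul]
  · by_cases hτ : 2 ≤ τ v ∧ τ v ≤ NN V
    · -- activated at time τ v
      set t := τ v with htdef
      set DW := ∑ x ∈ iA τ (t-1) \ iA τ (t-2), w x v with hDW
      set DWp := ∑ x ∈ iP τ s (t-1) \ iA τ (t-2), w x v with hDWp
      have hDWf : DW = ∑ x : V, (if τ x = t - 1 then w x v else 0) := by
        rw [hDW, sdiffA_eq_filter τ hτ.1, Finset.sum_filter]
      have hDWpf : DWp = ∑ x : V, (if τ x = t - 1 ∧ s x = true then w x v else 0) := by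
        rw [hDWp, sdiffP_eq_filter τ s hτ.1, Finset.sum_filter]
      have hDWp_le : DWp ≤ DW := by
        rw [hDWf, hDWpf]
        apply Finset.sum_le_sum
        intro x _
        by_cases h1 : τ x = t - 1 ∧ s x = true
        · rw [if_pos h1, if_pos h1.1]
        · split_ifs <;> simp [hw0 x v]
      have hDWp0 : 0 ≤ DWp := by
        rw [hDWpf]
        apply Finset.sum_nonneg
        intro x _
        split_ifs <;> simp [hw0 x v]
      -- the main cancellation identity
      have hkey : DW * ipP w qp qm τ s t v = qp v * DW + (1 - (qp v + qm v)) * DWp := by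
        unfold ipP
        rw [← hDW, ← hDWp]
        rcases eq_or_lt_of_le (le_trans hDWp0 hDWp_le) with h0 | h0
        · rw [← h0]
          have : DWp = 0 := le_antisymm (h0 ▸ hDWp_le) hDWp0
          rw [this]
          ring
        · field_simp
      -- value of bFac
      have hbFac : bFac w S τ s v = DW := by
        unfold bFac
        rw [if_neg hv, if_pos hτ]
        by_cases h2 : τ v = 2
        · rw [if_pos h2]
          have hiA0 : iA τ (t-2) = ∅ := by
            ext x
            simp only [iA, Finset.mem_filter, Finset.mem_univ, true_and,
              Finset.notMem_empty, iff_false]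
            have := hOK1 x
            omega
          rw [hDW, hiA0, Finset.sdiff_empty]
          have : t - 1 = 1 := by omega
          rw [this]
          rfl
        · rw [if_neg h2, hDW, Finset.sum_sdiff_eq_sub (iA_mono τ (by omega))]
          rfl
      -- now compute the RHS sum
      have hnone : ∑ c : Option Bool,
          pw w v none * pq qp qm v c * (if Loc S τ s v none c then 1 else 0) = 0 := by
        apply Finset.sum_eq_zero
        intro c _
        have : ¬ Loc S τ s v none c := by
          unfold Loc
          rw [if_neg hv, if_pos hτ]
          rintro ⟨x, hx, -⟩
          exact nomatch hx
        rw [if_neg this, mul_zero]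
      have hsome : ∀ x : V, ∑ c : Option Bool,
          pw w v (some x) * pq qp qm v c * (if Loc S τ s v (some x) c then 1 else 0)
            = (if τ x = t - 1 then w x v else 0) *
                (if s v = true then qp v + (if s x = true then 1 - (qp v + qm v) else 0)
                 else qm v + (if s x = true then 0 else 1 - (qp v + qm v))) := by
        intro x
        have hLoc : ∀ c : Option Bool, Loc S τ s v (some x) c ↔
            (τ x = t - 1 ∧ (s v = true ↔ (c = some true ∨ (c = none ∧ s x = true)))) := by
          intro c
          unfold Loc
          rw [if_neg hv, if_pos hτ]
          constructor
          · rintro ⟨y, hy, h1, h2⟩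
            cases Option.some.injEq x y ▸ hy with
            | refl => exact ⟨h1, h2⟩
          · rintro ⟨h1, h2⟩
            exact ⟨x, rfl, h1, h2⟩
        rw [Fintype.sum_option, Fintype.sum_bool]
        by_cases hτx : τ x = t - 1
        · rw [if_pos hτx]
          by_cases hsv : s v = true
          · rw [if_pos hsv]
            by_cases hsx : s x = true
            · rw [if_pos hsx]
              rw [if_pos ((hLoc none).mpr ⟨hτx, by simp [hsv, hsx]⟩),
                if_pos ((hLoc (some true)).mpr ⟨hτx, by simp [hsv]⟩),
                if_neg (fun hc => by simpa [hsv] using ((hLoc (some false)).mp hc).2)]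
              simp [pw, pq]
              ring
            · rw [if_neg hsx]
              rw [if_neg (fun hc => by simpa [hsv, hsx] using ((hLoc none).mp hc).2),
                if_pos ((hLoc (some true)).mpr ⟨hτx, by simp [hsv]⟩),
                if_neg (fun hc => by simpa [hsv] using ((hLoc (some false)).mp hc).2)]
              simp [pw, pq]
          · have hsv' : s v = false := by
              rcases Bool.eq_false_or_eq_true (s v) with h | h
              · exact absurd h hsv
              · exact h
            rw [if_neg hsv]
            by_cases hsx : s x = true
            · rw [if_pos hsx]
              rw [if_neg (fun hc => by simpa [hsv', hsx] using ((hLoc none).mp hc).2),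
                if_neg (fun hc => by simpa [hsv'] using ((hLoc (some true)).mp hc).2),
                if_pos ((hLoc (some false)).mpr ⟨hτx, by simp [hsv']⟩)]
              simp [pw, pq]
            · rw [if_neg hsx]
              rw [if_pos ((hLoc none).mpr ⟨hτx, by simp [hsv', hsx]⟩),
                if_neg (fun hc => by simpa [hsv'] using ((hLoc (some true)).mp hc).2),
                if_pos ((hLoc (some false)).mpr ⟨hτx, by simp [hsv']⟩)]
              simp [pw, pq]
              ring
        · rw [if_neg hτx]
          rw [if_neg (fun hc => hτx ((hLoc none).mp hc).1),
            if_neg (fun hc => hτx ((hLoc (some true)).mp hc).1),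
            if_neg (fun hc => hτx ((hLoc (some false)).mp hc).1)]
          simp
      rw [Fintype.sum_option, hnone, zero_add,
        Finset.sum_congr rfl (fun x _ => hsome x)]
      by_cases hsv : s v = true
      · simp only [hsv, if_true]
        have : ∑ x : V, (if τ x = t - 1 then w x v else 0) *
            (qp v + (if s x = true then 1 - (qp v + qm v) else 0))
              = qp v * DW + (1 - (qp v + qm v)) * DWp := by
          rw [hDWf, hDWpf, Finset.mul_sum, Finset.mul_sum, ← Finset.sum_add_distrib]
          apply Finset.sum_congr rfl
          intro x _
          by_cases h1 : τ x = t - 1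
          · by_cases h2 : s x = true
            · rw [if_pos h1, if_pos h2, if_pos ⟨h1, h2⟩]
              ring
            · rw [if_pos h1, if_neg h2, if_neg (show ¬(τ x = t - 1 ∧ s x = true) from fun hc => h2 hc.2)]
              ring
          · rw [if_neg h1, if_neg (show ¬(τ x = t - 1 ∧ s x = true) from fun hc => h1 hc.1)]
            ring
        rw [this, ← hkey]
        unfold uFac
        rw [if_neg hv, if_pos hτ, if_pos hsv, hbFac]
      · simp only [if_neg hsv]
        have : ∑ x : V, (if τ x = t - 1 then w x v else 0) *
            (qm v + (if s x = true then 0 else 1 - (qp v + qm v)))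
              = qm v * DW + (1 - (qp v + qm v)) * (DW - DWp) := by
          rw [hDWf, hDWpf, Finset.mul_sum, mul_sub, Finset.mul_sum, Finset.mul_sum,
            ← Finset.sum_sub_distrib, ← Finset.sum_add_distrib]
          apply Finset.sum_congr rfl
          intro x _
          by_cases h1 : τ x = t - 1
          · by_cases h2 : s x = true
            · rw [if_pos h1, if_pos h2, if_pos ⟨h1, h2⟩]
              ring
            · rw [if_pos h1, if_neg h2, if_neg (show ¬(τ x = t - 1 ∧ s x = true) from fun hc => h2 hc.2)]
              ring
          · rw [if_neg h1, if_neg (show ¬(τ x = t - 1 ∧ s x = true) from fun hc => h1 hc.1)]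
            ring
        rw [this]
        unfold uFac
        rw [if_neg hv, if_pos hτ, if_neg hsv, hbFac]
        have : DW * (1 - ipP w qp qm τ s t v) = DW - DW * ipP w qp qm τ s t v := by ring
        rw [this, hkey]
        ring
    · by_cases hτtop : τ v = NN V + 1
      · -- never activated
        by_cases hsv : s v = true
        · -- impossible sign: both sides are 0
          have h1 : uFac w qp qm S τ s v = 0 := by
            unfold uFac
            rw [if_neg hv, if_neg hτ, if_pos hτtop, if_pos hsv]
          rw [h1, mul_zero]
          symm
          apply Finset.sum_eq_zero
          intro o _
          apply Finset.sum_eq_zero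
          intro c _
          have : ¬ Loc S τ s v o c := by
            unfold Loc
            rw [if_neg hv, if_neg hτ, if_pos hτtop]
            rintro ⟨hc, -⟩
            rw [hsv] at hc
            exact Bool.noConfusion hc
          simp [this]
        · have hsv' : s v = false := by
            rcases Bool.eq_false_or_eq_true (s v) with h | h
            · exact absurd h hsv
            · exact h
          have hLoc : ∀ (o : Option V) (c : Option Bool), Loc S τ s v o c ↔
              (o = none ∨ ∃ x, o = some x ∧ NN V ≤ τ x) := by
            intro o c
            unfold Loc
            rw [if_neg hv, if_neg hτ, if_pos hτtop]
            constructor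
            · rintro ⟨-, h⟩
              exact h
            · intro h
              exact ⟨hsv', h⟩
          have hinner : ∀ o : Option V, ∑ c : Option Bool,
              pw w v o * pq qp qm v c * (if Loc S τ s v o c then 1 else 0)
                = pw w v o * (if (o = none ∨ ∃ x, o = some x ∧ NN V ≤ τ x) then 1 else 0) := by
            intro o
            have : ∀ c : Option Bool,
                pw w v o * pq qp qm v c * (if Loc S τ s v o c then 1 else 0)
                  = (pw w v o * (if (o = none ∨ ∃ x, o = some x ∧ NN V ≤ τ x) then 1 else 0))
                      * pq qp qm v c := by
              intro c
              rw [if_congr (hLoc o c) rfl rfl]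
              ring
            rw [Finset.sum_congr rfl (fun c _ => this c), ← Finset.mul_sum, sum_pq, mul_one]
          rw [Fintype.sum_option]
          rw [hinner none, Finset.sum_congr rfl (fun x _ => hinner (some x))]
          rw [if_pos (Or.inl rfl), mul_one]
          have hx : ∀ x : V, pw w v (some x) *
              (if (some x = (none : Option V) ∨ ∃ y, (some x : Option V) = some y ∧ NN V ≤ τ y) then 1 else 0)
                = (if NN V ≤ τ x then w x v else 0) := by
            intro x
            by_cases h1 : NN V ≤ τ x
            · rw [if_pos (Or.inr ⟨x, rfl, h1⟩), if_pos h1]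
              simp [pw]
            · rw [if_neg, if_neg h1]
              · simp
              · rintro (hc | ⟨y, hy, hc⟩)
                · exact nomatch hc
                · cases Option.some.injEq x y ▸ hy with
                  | refl => exact h1 hc
            
          rw [Finset.sum_congr rfl (fun x _ => hx x)]
          unfold bFac uFac
          rw [if_neg hv, if_neg hτ, if_pos hτtop, if_neg hv, if_neg hτ, if_pos hτtop,
            if_neg hsv, mul_one]
          have hsplit : ∑ x : V, w x v
              = iW w τ (NN V - 1) v + ∑ x : V, (if NN V ≤ τ x then w x v else 0) := by
            have : iW w τ (NN V - 1) v = ∑ x : V, (if τ x ≤ NN V - 1 then w x v else 0) := by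
              unfold iW iA
              rw [Finset.sum_filter]
            rw [this, ← Finset.sum_add_distrib]
            apply Finset.sum_congr rfl
            intro x _
            have hNN : 1 ≤ NN V := by unfold NN; omega
            by_cases h1 : τ x ≤ NN V - 1
            · rw [if_pos h1, if_neg (by omega)]
              ring
            · rw [if_neg h1, if_pos (by omega)]
              ring
          simp [pw]
          linarith
      · -- junk index: both sides 0
        have h1 : bFac w S τ s v = 0 := by
          unfold bFac
          rw [if_neg hv, if_neg hτ, if_neg hτtop]
        rw [h1, zero_mul]
        symm
        apply Finset.sum_eq_zero
        intro o _
        apply Finset.sum_eq_zero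
        intro c _
        have : ¬ Loc S τ s v o c := by
          unfold Loc
          rw [if_neg hv, if_neg hτ, if_neg hτtop]
          exact fun hc => hc
        simp [this]

lemma bad_node (τ : V → ℕ) (s : V → Bool) (hbad : ¬ iOK S τ s) :
    ∃ x : V, bFac w S τ s x * uFac w qp qm S τ s x = 0 ∧
      ∀ (o : Option V) (c : Option Bool), ¬ Loc S τ s x o c := by
  unfold iOK at hbad
  push_neg at hbad
  have hNN : 1 ≤ NN V := by unfold NN; omega
  by_cases h1 : ∀ v, 1 ≤ τ v
  · by_cases h2 : ∀ v : V, (τ v = 1 ↔ v ∈ S)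
    · obtain ⟨x, hxS, hxs⟩ := (hbad h1) h2
      refine ⟨x, ?_, ?_⟩
      · unfold bFac uFac
        rw [if_pos hxS, if_pos hxS, if_neg (fun hc => hxs hc.2), zero_mul]
      · intro o c
        unfold Loc
        rw [if_pos hxS]
        exact fun hc => hxs hc.2
    · push_neg at h2
      obtain ⟨x, hx⟩ := h2
      rcases hx with ⟨hx1, hx2⟩ | ⟨hx2, hx1⟩
      · -- τ x = 1 but x ∉ S
        refine ⟨x, ?_, ?_⟩
        · unfold bFac uFac
          rw [if_neg hx2, if_neg (by omega), if_neg (by omega), zero_mul]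
        · intro o c
          unfold Loc
          rw [if_neg hx2, if_neg (by omega), if_neg (by omega)]
          exact fun hc => hc
      · -- x ∈ S but τ x ≠ 1
        refine ⟨x, ?_, ?_⟩
        · unfold bFac uFac
          rw [if_pos hx1, if_pos hx1, if_neg (fun hc => hx2 hc.1), zero_mul]
        · intro o c
          unfold Loc
          rw [if_pos hx1]
          exact fun hc => hx2 hc.1
  · push_neg at h1
    obtain ⟨x, hx⟩ := h1
    have hx0 : τ x = 0 := by omega
    by_cases hxS : x ∈ S
    · refine ⟨x, ?_, ?_⟩
      · unfold bFac uFac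
        rw [if_pos hxS, if_pos hxS, if_neg (by omega), zero_mul]
      · intro o c
        unfold Loc
        rw [if_pos hxS]
        omega
    · refine ⟨x, ?_, ?_⟩
      · unfold bFac uFac
        rw [if_neg hxS, if_neg (by omega), if_neg (by omega), zero_mul]
      · intro o c
        unfold Loc
        rw [if_neg hxS, if_neg (by omega), if_neg (by omega)]
        exact fun hc => hc

lemma prod_fac_eq (hw0 : ∀ x v, 0 ≤ w x v) (hw1 : ∀ v, ∑ x, w x v ≤ 1)
    (τ : V → ℕ) (s : V → Bool) :
    (∏ v, bFac w S τ s v * uFac w qp qm S τ s v)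
      = ∏ v, ∑ oc : Option V × Option Bool,
          pw w v oc.1 * pq qp qm v oc.2 * (if Loc S τ s v oc.1 oc.2 then 1 else 0) := by
  by_cases hOK : iOK S τ s
  · exact Finset.prod_congr rfl (fun v _ => node_sum w qp qm S hw0 hw1 τ s hOK v)
  · obtain ⟨x, hx1, hx2⟩ := bad_node w qp qm S τ s hOK
    rw [Finset.prod_eq_zero (Finset.mem_univ x) hx1,
      Finset.prod_eq_zero (Finset.mem_univ x)]
    apply Finset.sum_eq_zero
    intro oc _
    rw [if_neg (hx2 oc.1 oc.2), mul_zero]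

lemma prod_sum_to_cfg (τ : V → ℕ) (s : V → Bool) :
    (∏ v, ∑ oc : Option V × Option Bool,
        pw w v oc.1 * pq qp qm v oc.2 * (if Loc S τ s v oc.1 oc.2 then 1 else 0))
      = ∑ cfg : V → Option V × Option Bool,
          (∏ v, pw w v (cfg v).1 * pq qp qm v (cfg v).2) *
            (if ∀ v, Loc S τ s v (cfg v).1 (cfg v).2 then 1 else 0) := by
  rw [Fintype.prod_sum]
  apply Finset.sum_congr rfl
  intro cfg _
  rw [← Fintype.prod_boole (p := fun v => Loc S τ s v (cfg v).1 (cfg v).2), ← Finset.prod_mul_distrib]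

/-! the deterministic live-edge process -/

variable (cfg : V → Option V × Option Bool)

def AL : ℕ → Finset V
  | 0 => ∅
  | t+1 => S ∪ Finset.univ.filter (fun v => ∃ x, (cfg v).1 = some x ∧ x ∈ AL t)

def res : ℕ → V → Bool
  | 0, _ => false
  | k+1, v =>
    if v ∈ S then true
    else
      match (cfg v).2 with
      | some bb => bb
      | none =>
        match (cfg v).1 with
        | some x => res k x
        | none => false

lemma AL_zero : AL S cfg 0 = ∅ := rfl

lemma AL_succ (t : ℕ) : AL S cfg (t+1)
    = S ∪ Finset.univ.filter (fun v => ∃ x, (cfg v).1 = some x ∧ x ∈ AL S cfg t) := rfl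

lemma AL_one : AL S cfg 1 = S := by
  rw [AL_succ]
  simp [AL_zero]

lemma AL_succ_mem (t : ℕ) (v : V) :
    v ∈ AL S cfg (t+1) ↔ v ∈ S ∨ ∃ x, (cfg v).1 = some x ∧ x ∈ AL S cfg t := by
  rw [AL_succ]
  simp

lemma AL_mono_succ (t : ℕ) : AL S cfg t ⊆ AL S cfg (t+1) := by
  induction t with
  | zero => simp [AL]
  | succ t ih =>
      intro v hv
      rw [AL_succ_mem] at hv ⊢
      rcases hv with h | ⟨x, hx1, hx2⟩
      · exact Or.inl h
      · exact Or.inr ⟨x, hx1, ih hx2⟩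

lemma AL_mono {t t' : ℕ} (h : t ≤ t') : AL S cfg t ⊆ AL S cfg t' := by
  induction t', h using Nat.le_induction with
  | base => exact Finset.Subset.refl _
  | succ n hn ih => exact ih.trans (AL_mono_succ S cfg n)

noncomputable def tauL (v : V) : ℕ :=
  if v ∈ AL S cfg (NN V) then sInf {t | v ∈ AL S cfg t} else NN V + 1

noncomputable def sL (v : V) : Bool := decide (v ∈ AL S cfg (NN V)) && res S cfg (NN V) v

lemma mem_AL_iff_tauL {t : ℕ} (ht : t ≤ NN V) (v : V) :
    v ∈ AL S cfg t ↔ tauL S cfg v ≤ t := by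
  constructor
  · intro hv
    unfold tauL
    rw [if_pos (AL_mono S cfg ht hv)]
    exact Nat.sInf_le hv
  · intro hle
    by_cases hN : v ∈ AL S cfg (NN V)
    · unfold tauL at hle
      rw [if_pos hN] at hle
      have hne : {t | v ∈ AL S cfg t}.Nonempty := ⟨NN V, hN⟩
      exact AL_mono S cfg hle (Nat.sInf_mem hne)
    · exfalso
      unfold tauL at hle
      rw [if_neg hN] at hle
      omega

lemma tauL_pos (v : V) : 1 ≤ tauL S cfg v := by
  by_contra h
  push_neg at h
  have : tauL S cfg v ≤ 0 := by omega
  have := (mem_AL_iff_tauL S cfg (Nat.zero_le _) v).mpr this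
  simp [AL] at this

lemma res_stable : ∀ t, ∀ v ∈ AL S cfg t, ∀ k k', t ≤ k → t ≤ k' →
    res S cfg k v = res S cfg k' v := by
  intro t
  induction t with
  | zero => intro v hv; simp [AL] at hv
  | succ t ih =>
      intro v hv k k' hk hk'
      obtain ⟨k₀, rfl⟩ : ∃ k₀, k = k₀ + 1 := ⟨k - 1, by omega⟩
      obtain ⟨k₁, rfl⟩ : ∃ k₁, k' = k₁ + 1 := ⟨k' - 1, by omega⟩
      rw [AL_succ_mem] at hv
      by_cases hvS : v ∈ S
      · simp [res, hvS]
      · rcases hv with h | ⟨x, hx1, hx2⟩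
        · exact absurd h hvS
        · simp only [res, if_neg hvS]
          cases hc : (cfg v).2 with
          | some bb => rfl
          | none =>
              rw [hx1]
              exact ih x hx2 k₀ k₁ (by omega) (by omega)

lemma NN_succ : NN V = Fintype.card V + 1 := rfl

lemma res_succ_def (k : ℕ) (v : V) :
    res S cfg (k+1) v = if v ∈ S then true
      else match (cfg v).2 with
        | some bb => bb
        | none => match (cfg v).1 with
          | some x => res S cfg k x
          | none => false := rfl

lemma res_NN_def (v : V) :
    res S cfg (NN V) v = if v ∈ S then true
      else match (cfg v).2 with
        | some bb => bb
        | none => match (cfg v).1 with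
          | some x => res S cfg (Fintype.card V) x
          | none => false := rfl

lemma tauL_seed {v : V} (hv : v ∈ S) : tauL S cfg v = 1 := by
  have h1 : v ∈ AL S cfg 1 := by rw [AL_one]; exact hv
  have := (mem_AL_iff_tauL S cfg (by rw [NN_succ]; omega) v).mp h1
  have := tauL_pos S cfg v
  omega

lemma sL_seed {v : V} (hv : v ∈ S) : sL S cfg v = true := by
  unfold sL
  have h1 : v ∈ AL S cfg (NN V) := by
    apply AL_mono S cfg (show 1 ≤ NN V by rw [NN_succ]; omega)
    rw [AL_one]
    exact hv
  rw [res_NN_def, if_pos hv]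
  simp [h1]

/-- existence : the live-edge labelling satisfies all local conditions. -/
lemma Loc_L (v : V) : Loc S (tauL S cfg) (sL S cfg) v (cfg v).1 (cfg v).2 := by
  have hNNc : NN V = Fintype.card V + 1 := rfl
  by_cases hv : v ∈ S
  · unfold Loc
    rw [if_pos hv]
    exact ⟨tauL_seed S cfg hv, sL_seed S cfg hv⟩
  · by_cases hN : v ∈ AL S cfg (NN V)
    · have hmN : tauL S cfg v ≤ NN V := (mem_AL_iff_tauL S cfg le_rfl v).mp hN
      have hm2 : 2 ≤ tauL S cfg v := by
        have h1 := tauL_pos S cfg v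
        rcases Nat.lt_or_ge (tauL S cfg v) 2 with h | h
        · exfalso
          have : tauL S cfg v ≤ 1 := by omega
          have := (mem_AL_iff_tauL S cfg (by rw [NN_succ]; omega) v).mpr this
          rw [AL_one] at this
          exact hv this
        · exact h
      obtain ⟨k, hk⟩ : ∃ k, tauL S cfg v = k + 1 := ⟨tauL S cfg v - 1, by omega⟩
      have hk1 : 1 ≤ k := by omega
      have hkN : k ≤ NN V := by omega
      have hvm : v ∈ AL S cfg (k+1) :=
        (mem_AL_iff_tauL S cfg (by omega) v).mpr (by omega)
      have hvm' : v ∉ AL S cfg k := by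
        rw [mem_AL_iff_tauL S cfg hkN v]
        omega
      rw [AL_succ_mem] at hvm
      rcases hvm with h | ⟨x, hx1, hx2⟩
      · exact absurd h hv
      · have hτx : tauL S cfg x = k := by
          have hle : tauL S cfg x ≤ k := (mem_AL_iff_tauL S cfg hkN x).mp hx2
          rcases Nat.lt_or_ge (tauL S cfg x) k with hlt | hge
          · exfalso
            have : x ∈ AL S cfg (k-1) :=
              (mem_AL_iff_tauL S cfg (by omega) x).mpr (by omega)
            have : v ∈ AL S cfg k := by
              have hk' : k - 1 + 1 = k := by omega
              rw [← hk']
              rw [AL_succ_mem]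
              exact Or.inr ⟨x, hx1, this⟩
            exact hvm' this
          · omega
        unfold Loc
        rw [if_neg hv, if_pos ⟨hm2, hmN⟩]
        refine ⟨x, hx1, by omega, ?_⟩
        have hsLv : sL S cfg v = res S cfg (NN V) v := by
          unfold sL
          simp [hN]
        have hxN : x ∈ AL S cfg (NN V) := AL_mono S cfg hkN hx2
        have hsLx : sL S cfg x = res S cfg (Fintype.card V) x := by
          unfold sL
          rw [show decide (x ∈ AL S cfg (NN V)) = true from decide_eq_true hxN, Bool.true_and]
          exact res_stable S cfg k x hx2 (NN V) (Fintype.card V) (by omega) (by omega)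
        rw [hsLv, res_NN_def, if_neg hv]
        cases hc : (cfg v).2 with
        | some bb =>
            cases bb with
            | true => simp
            | false => simp
        | none =>
            rw [hx1]
            show res S cfg (Fintype.card V) x = true ↔ _
            rw [hsLx]
            simp
    · have hτtop : tauL S cfg v = NN V + 1 := by
        unfold tauL
        rw [if_neg hN]
      unfold Loc
      rw [if_neg hv, if_neg (by omega), if_pos hτtop]
      constructor
      · unfold sL
        simp [hN]
      · cases hc : (cfg v).1 with
        | none => exact Or.inl rfl
        | some x =>
            refine Or.inr ⟨x, rfl, ?_⟩
            by_contra hcon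
            push_neg at hcon
            have hx : x ∈ AL S cfg (NN V - 1) :=
              (mem_AL_iff_tauL S cfg (by omega) x).mpr (by omega)
            have : v ∈ AL S cfg (NN V) := by
              have hk' : NN V - 1 + 1 = NN V := by rw [NN_succ]; omega
              rw [← hk', AL_succ_mem]
              exact Or.inr ⟨x, hc, hx⟩
            exact hN this

lemma Loc_unique (τ : V → ℕ) (s : V → Bool)
    (h : ∀ v, Loc S τ s v (cfg v).1 (cfg v).2) :
    (∀ v, τ v = tauL S cfg v) ∧ (∀ v, s v = sL S cfg v) := by
  have hNNc : NN V = Fintype.card V + 1 := rfl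
  -- local facts
  have fseed : ∀ v ∈ S, τ v = 1 ∧ s v = true := by
    intro v hv
    have := h v
    unfold Loc at this
    rwa [if_pos hv] at this
  have fnon : ∀ v, v ∉ S →
      (2 ≤ τ v ∧ τ v ≤ NN V ∧ ∃ x, (cfg v).1 = some x ∧ τ x = τ v - 1 ∧
        (s v = true ↔ ((cfg v).2 = some true ∨ ((cfg v).2 = none ∧ s x = true)))) ∨
      (τ v = NN V + 1 ∧ s v = false ∧
        ((cfg v).1 = none ∨ ∃ x, (cfg v).1 = some x ∧ NN V ≤ τ x)) := by
    intro v hv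
    have := h v
    unfold Loc at this
    rw [if_neg hv] at this
    by_cases h1 : 2 ≤ τ v ∧ τ v ≤ NN V
    · rw [if_pos h1] at this
      exact Or.inl ⟨h1.1, h1.2, this⟩
    · rw [if_neg h1] at this
      by_cases h2 : τ v = NN V + 1
      · rw [if_pos h2] at this
        exact Or.inr ⟨h2, this.1, this.2⟩
      · rw [if_neg h2] at this
        exact absurd this id
  have fpos : ∀ v, 1 ≤ τ v := by
    intro v
    by_cases hv : v ∈ S
    · have := (fseed v hv).1
      omega
    · rcases fnon v hv with ⟨h1, -⟩ | ⟨h1, -⟩ <;> omega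
  -- step 1 : the activated sets agree
  have hAL : ∀ t, t ≤ NN V → iA τ t = AL S cfg t := by
    intro t
    induction t with
    | zero =>
        intro _
        rw [AL_zero]
        ext v
        simp only [iA, Finset.mem_filter, Finset.mem_univ, true_and,
          Finset.notMem_empty, iff_false]
        have := fpos v
        omega
    | succ t ih =>
        intro ht
        have iht := ih (by omega)
        ext v
        simp only [iA, Finset.mem_filter, Finset.mem_univ, true_and]
        rw [AL_succ_mem]
        constructor
        · intro hτv
          by_cases hv : v ∈ S
          · exact Or.inl hv
          · rcases fnon v hv with ⟨h1, h2, x, hx1, hx2, -⟩ | ⟨h1, -⟩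
            · refine Or.inr ⟨x, hx1, ?_⟩
              rw [← iht]
              simp only [iA, Finset.mem_filter, Finset.mem_univ, true_and]
              omega
            · omega
        · rintro (hv | ⟨x, hx1, hx2⟩)
          · exact le_of_eq_of_le (fseed v hv).1 (by omega)
          · rw [← iht] at hx2
            simp only [iA, Finset.mem_filter, Finset.mem_univ, true_and] at hx2
            by_cases hv : v ∈ S
            · exact le_of_eq_of_le (fseed v hv).1 (by omega)
            · rcases fnon v hv with ⟨h1, h2, y, hy1, hy2, -⟩ | ⟨h1, h2, hor⟩
              · rw [hx1] at hy1
                cases Option.some.inj hy1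
                omega
              · exfalso
                rcases hor with hnone | ⟨y, hy1, hy2⟩
                · rw [hx1] at hnone
                  exact nomatch hnone
                · rw [hx1] at hy1
                  cases Option.some.inj hy1
                  omega
  -- step 2 : activation times agree
  have hτeq : ∀ v, τ v = tauL S cfg v := by
    intro v
    by_cases hτN : τ v ≤ NN V
    · have h1 : v ∈ AL S cfg (τ v) := by
        rw [← hAL (τ v) hτN]
        simp [iA]
      have h2 : tauL S cfg v ≤ τ v := (mem_AL_iff_tauL S cfg hτN v).mp h1
      have h3 : v ∈ AL S cfg (tauL S cfg v) :=
        (mem_AL_iff_tauL S cfg (by omega) v).mpr le_rfl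
      rw [← hAL _ (by omega)] at h3
      simp only [iA, Finset.mem_filter, Finset.mem_univ, true_and] at h3
      omega
    · have hτtop : τ v = NN V + 1 := by
        by_cases hv : v ∈ S
        · have := (fseed v hv).1
          omega
        · rcases fnon v hv with ⟨h1, h2, -⟩ | ⟨h1, -⟩ <;> omega
      have : v ∉ AL S cfg (NN V) := by
        rw [← hAL _ le_rfl]
        simp only [iA, Finset.mem_filter, Finset.mem_univ, true_and]
        omega
      unfold tauL
      rw [if_neg this, hτtop]
  -- step 3 : the signs agree on activated vertices
  have hsres : ∀ t, t ≤ NN V → ∀ v ∈ AL S cfg t, s v = res S cfg t v := by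
    intro t
    induction t with
    | zero =>
        intro _ v hv
        simp [AL_zero] at hv
    | succ t ih =>
        intro ht v hv
        by_cases hvS : v ∈ S
        · rw [res_succ_def, if_pos hvS]
          exact (fseed v hvS).2
        · by_cases hvt : v ∈ AL S cfg t
          · rw [res_stable S cfg t v hvt (t+1) t (by omega) le_rfl]
            exact ih (by omega) v hvt
          · have hτv : τ v = t + 1 := by
              rw [hτeq v]
              have h1 : tauL S cfg v ≤ t + 1 := (mem_AL_iff_tauL S cfg ht v).mp hv
              have h2 : ¬ tauL S cfg v ≤ t := fun hc =>
                hvt ((mem_AL_iff_tauL S cfg (by omega) v).mpr hc)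
              omega
            rcases fnon v hvS with ⟨h1, h2, x, hx1, hx2, hsg⟩ | ⟨h1, -⟩
            · have hτx : τ x = t := by omega
              have hxALt : x ∈ AL S cfg t := by
                rw [← hAL t (by omega)]
                simp [iA, hτx]
              have hsx := ih (by omega) x hxALt
              rw [res_succ_def, if_neg hvS]
              cases hc : (cfg v).2 with
              | some bb =>
                  rw [hc] at hsg
                  cases bb with
                  | true =>
                      simp only [true_or, iff_true] at hsg
                      · exact hsg
                  | false =>
                      simp at hsg
                      exact hsg
              | none =>
                  rw [hc] at hsg
                  rw [hx1]
                  show s v = res S cfg t x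
                  rw [← hsx]
                  rcases Bool.eq_false_or_eq_true (s x) with hb | hb
                  · rw [hb]
                    exact hsg.mpr (Or.inr ⟨rfl, hb⟩)
                  · rcases Bool.eq_false_or_eq_true (s v) with hb' | hb'
                    · exfalso
                      rcases hsg.mp hb' with hc1 | ⟨-, hc2⟩
                      · exact nomatch hc1
                      · rw [hb] at hc2
                        exact Bool.noConfusion hc2
                    · rw [hb, hb']
            · omega
  have hseq : ∀ v, s v = sL S cfg v := by
    intro v
    by_cases hN : v ∈ AL S cfg (NN V)
    · rw [hsres (NN V) le_rfl v hN]
      unfold sL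
      simp [hN]
    · have hvS : v ∉ S := by
        intro hc
        apply hN
        apply AL_mono S cfg (show 1 ≤ NN V by omega)
        rw [AL_one]
        exact hc
      have hτv : ¬ τ v ≤ NN V := by
        intro hc
        apply hN
        rw [← hAL _ le_rfl]
        simp [iA, hc]
      rcases fnon v hvS with ⟨h1, h2, -⟩ | ⟨-, h2, -⟩
      · omega
      · rw [h2]
        unfold sL
        simp [hN]
  exact ⟨hτeq, hseq⟩

/-! coverage representation -/

def orb : ℕ → V → Finset V
  | 0, _ => ∅
  | k+1, v => insert v (match (cfg v).1 with
      | none => ∅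
      | some x => orb k x)

def Rset : ℕ → V → Finset V
  | 0, _ => ∅
  | k+1, v =>
    match (cfg v).2 with
    | some false => {v}
    | some true => insert v (match (cfg v).1 with
        | none => ∅
        | some x => orb cfg k x)
    | none => insert v (match (cfg v).1 with
        | none => ∅
        | some x => Rset k x)

lemma orb_succ (k : ℕ) (v : V) : orb cfg (k+1) v
    = insert v (match (cfg v).1 with | none => ∅ | some x => orb cfg k x) := rfl

lemma Rset_succ (k : ℕ) (v : V) : Rset cfg (k+1) v
    = (match (cfg v).2 with
      | some false => {v}
      | some true => insert v (match (cfg v).1 with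
          | none => ∅
          | some x => orb cfg k x)
      | none => insert v (match (cfg v).1 with
          | none => ∅
          | some x => Rset cfg k x)) := rfl

lemma mem_AL_orb : ∀ (k : ℕ) (v : V), v ∈ AL S cfg k ↔ (S ∩ orb cfg k v).Nonempty := by
  intro k
  induction k with
  | zero =>
      intro v
      simp [AL_zero, orb]
  | succ k ih =>
      intro v
      cases hc : (cfg v).1 with
      | none =>
          have hO : orb cfg (k+1) v = insert v ∅ := by rw [orb_succ, hc]
          rw [AL_succ_mem, hO]
          constructor
          · rintro (hv | ⟨x, hx, -⟩)
            · exact ⟨v, Finset.mem_inter.mpr ⟨hv, Finset.mem_insert_self _ _⟩⟩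
            · rw [hc] at hx
              exact nomatch hx
          · rintro ⟨y, hy⟩
            rw [Finset.mem_inter, Finset.mem_insert] at hy
            rcases hy.2 with rfl | hy2
            · exact Or.inl hy.1
            · simp at hy2
      | some x =>
          have hO : orb cfg (k+1) v = insert v (orb cfg k x) := by rw [orb_succ, hc]
          rw [AL_succ_mem, hO]
          constructor
          · rintro (hv | ⟨y, hy, hmem⟩)
            · exact ⟨v, Finset.mem_inter.mpr ⟨hv, Finset.mem_insert_self _ _⟩⟩
            · rw [hc] at hy
              obtain rfl := Option.some.inj hy
              obtain ⟨z, hz⟩ := (ih x).mp hmem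
              rw [Finset.mem_inter] at hz
              exact ⟨z, Finset.mem_inter.mpr ⟨hz.1, Finset.mem_insert_of_mem hz.2⟩⟩
          · rintro ⟨y, hy⟩
            rw [Finset.mem_inter, Finset.mem_insert] at hy
            rcases hy.2 with rfl | hy2
            · exact Or.inl hy.1
            · exact Or.inr ⟨x, hc, (ih x).mpr ⟨y, Finset.mem_inter.mpr ⟨hy.1, hy2⟩⟩⟩

lemma pos_iff : ∀ (k : ℕ) (v : V),
    (v ∈ AL S cfg k ∧ res S cfg k v = true) ↔ (S ∩ Rset cfg k v).Nonempty := by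
  intro k
  induction k with
  | zero =>
      intro v
      simp [AL_zero, Rset]
  | succ k ih =>
      intro v
      by_cases hvS : v ∈ S
      · have h1 : v ∈ AL S cfg (k+1) := by
          rw [AL_succ_mem]
          exact Or.inl hvS
        have h2 : res S cfg (k+1) v = true := by
          rw [res_succ_def, if_pos hvS]
        have h3 : v ∈ Rset cfg (k+1) v := by
          rw [Rset_succ]
          cases (cfg v).2 with
          | some bb => cases bb <;> simp
          | none => simp
        constructor
        · intro _
          exact ⟨v, Finset.mem_inter.mpr ⟨hvS, h3⟩⟩
        · intro _
          exact ⟨h1, h2⟩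
      · cases hc2 : (cfg v).2 with
        | some bb =>
          cases bb with
          | false =>
            have hres : res S cfg (k+1) v = false := by
              rw [res_succ_def, if_neg hvS, hc2]
            have hR : Rset cfg (k+1) v = {v} := by
              rw [Rset_succ, hc2]
            rw [hres, hR]
            constructor
            · rintro ⟨-, h⟩
              exact absurd h (by simp)
            · rintro ⟨y, hy⟩
              rw [Finset.mem_inter, Finset.mem_singleton] at hy
              obtain ⟨h1, rfl⟩ := hy
              exact absurd h1 hvS
          | true =>
            have hres : res S cfg (k+1) v = true := by
              rw [res_succ_def, if_neg hvS, hc2]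
            have hR : Rset cfg (k+1) v = orb cfg (k+1) v := by
              rw [Rset_succ, hc2, orb_succ]
            rw [hres, hR, ← mem_AL_orb S cfg (k+1) v]
            simp
        | none =>
          cases hc1 : (cfg v).1 with
          | none =>
            have hres : res S cfg (k+1) v = false := by
              rw [res_succ_def, if_neg hvS, hc2, hc1]
            have hR : Rset cfg (k+1) v = insert v ∅ := by
              rw [Rset_succ, hc2, hc1]
            rw [hres, hR]
            constructor
            · rintro ⟨-, h⟩
              exact absurd h (by simp)
            · rintro ⟨y, hy⟩
              rw [Finset.mem_inter, Finset.mem_insert] at hy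
              rcases hy.2 with rfl | h2
              · exact absurd hy.1 hvS
              · simp at h2
          | some x =>
            have hres : res S cfg (k+1) v = res S cfg k x := by
              rw [res_succ_def, if_neg hvS, hc2, hc1]
            have hR : Rset cfg (k+1) v = insert v (Rset cfg k x) := by
              rw [Rset_succ, hc2, hc1]
            have hA : v ∈ AL S cfg (k+1) ↔ x ∈ AL S cfg k := by
              rw [AL_succ_mem]
              constructor
              · rintro (hv | ⟨y, hy, hmem⟩)
                · exact absurd hv hvS
                · rw [hc1] at hy
                  obtain rfl := Option.some.inj hy
                  exact hmem
              · intro hx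
                exact Or.inr ⟨x, hc1, hx⟩
            rw [hres, hR, hA, ih x]
            constructor
            · rintro ⟨y, hy⟩
              rw [Finset.mem_inter] at hy
              exact ⟨y, Finset.mem_inter.mpr ⟨hy.1, Finset.mem_insert_of_mem hy.2⟩⟩
            · rintro ⟨y, hy⟩
              rw [Finset.mem_inter, Finset.mem_insert] at hy
              rcases hy.2 with rfl | h2
              · exact absurd hy.1 hvS
              · exact ⟨y, Finset.mem_inter.mpr ⟨hy.1, h2⟩⟩

lemma tauL_le (v : V) : tauL S cfg v ≤ NN V + 1 := by
  unfold tauL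
  split_ifs with h
  · exact le_trans (Nat.sInf_le h) (by omega)
  · exact le_refl _

noncomputable def LamF : Idx V :=
  (fun v => ⟨tauL S cfg v, by have := tauL_le S cfg v; omega⟩, sL S cfg)

lemma Loc_iff_eq (i : Idx V) :
    (∀ v, Loc S (idxT i) i.2 v (cfg v).1 (cfg v).2) ↔ i = LamF S cfg := by
  constructor
  · intro h
    obtain ⟨h1, h2⟩ := Loc_unique S cfg (idxT i) i.2 h
    refine Prod.ext ?_ (funext h2)
    funext v
    exact Fin.ext (h1 v)
  · intro h
    subst h
    have hτ : idxT (LamF S cfg) = tauL S cfg := rfl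
    have hs : (LamF S cfg).2 = sL S cfg := rfl
    rw [hτ, hs]
    exact fun v => Loc_L S cfg v

/-- the final combinatorial form of the expected positive influence. -/
lemma influence_eq_cfg (hw0 : ∀ x v, 0 ≤ w x v) (hw1 : ∀ v, ∑ x, w x v ≤ 1)
    (hqp : ∀ v, 0 ≤ qp v) (hqm : ∀ v, 0 ≤ qm v) (hr : ∀ v, qp v + qm v ≤ 1) :
    ltnPosInfluence w qp qm S
      = ∑ cfg : V → Option V × Option Bool,
          (∏ v, pw w v (cfg v).1 * pq qp qm v (cfg v).2) *
            ((Finset.univ.filter fun v =>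
              (S ∩ Rset cfg (NN V) v).Nonempty).card : ℝ) := by
  rw [influence_eq_idx_sum w qp qm S hw0 hw1 hqp hqm hr]
  have hstep : ∀ i : Idx V,
      (∏ v, bFac w S (idxT i) i.2 v * uFac w qp qm S (idxT i) i.2 v) *
          ((Finset.univ.filter fun v => i.2 v = true).card : ℝ)
        = ∑ cfg : V → Option V × Option Bool,
            (if i = LamF S cfg then
              (∏ v, pw w v (cfg v).1 * pq qp qm v (cfg v).2) *
                ((Finset.univ.filter fun v => i.2 v = true).card : ℝ) else 0) := by
    intro i
    rw [prod_fac_eq w qp qm S hw0 hw1, prod_sum_to_cfg w qp qm S, Finset.sum_mul]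
    apply Finset.sum_congr rfl
    intro cfg _
    rw [if_congr (Loc_iff_eq S cfg i) rfl rfl]
    by_cases h : i = LamF S cfg
    · rw [if_pos h, if_pos h, mul_one]
    · rw [if_neg h, if_neg h, mul_zero, zero_mul]
  rw [Finset.sum_congr rfl (fun i _ => hstep i), Finset.sum_comm]
  apply Finset.sum_congr rfl
  intro cfg _
  rw [Finset.sum_ite_eq' Finset.univ (LamF S cfg)
    (fun i => (∏ v, pw w v (cfg v).1 * pq qp qm v (cfg v).2) *
      ((Finset.univ.filter fun v => i.2 v = true).card : ℝ)),
    if_pos (Finset.mem_univ _)]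
  congr 2
  congr 1
  apply Finset.filter_congr
  intro v _
  have h2 : (LamF S cfg).2 v = sL S cfg v := rfl
  rw [h2]
  unfold sL
  rw [Bool.and_eq_true, decide_eq_true_eq]
  exact pos_iff S cfg (NN V) v

lemma pw_nonneg (hw0 : ∀ x v, 0 ≤ w x v) (hw1 : ∀ v, ∑ x, w x v ≤ 1) (v : V)
    (o : Option V) : 0 ≤ pw w v o := by
  cases o with
  | none => simp [pw]; linarith [hw1 v]
  | some x => exact hw0 x v

lemma pq_nonneg (hqp : ∀ v, 0 ≤ qp v) (hqm : ∀ v, 0 ≤ qm v)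
    (hr : ∀ v, qp v + qm v ≤ 1) (v : V) (c : Option Bool) : 0 ≤ pq qp qm v c := by
  cases c with
  | none => simp [pq]; linarith [hr v]
  | some bb => cases bb <;> simp [pq] <;> [exact hqm v; exact hqp v]

end LTN

/-- under the LT-N diffusion model on a finite directed graph with admissible
edge weights (`w ≥ 0`, incoming weight sums at most `1`) and admissible autonomy factors
(`q⁺, q⁻ ≥ 0` with `q⁺ + q⁻ ≤ 1`), the expected positive influence `f⁺` is monotone and
submodular as a function of the seed set. -/
theorem ltnPosInfluence_monotone_submodular {V : Type*} [Fintype V] [DecidableEq V]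
    (w : V → V → ℝ) (qp qm : V → ℝ)
    (hw_nonneg : ∀ u v : V, 0 ≤ w u v)
    (hw_sum : ∀ v : V, ∑ u : V, w u v ≤ 1)
    (hqp : ∀ v : V, 0 ≤ qp v) (hqm : ∀ v : V, 0 ≤ qm v)
    (hr : ∀ v : V, qp v + qm v ≤ 1) :
    (∀ S T : Finset V, S ⊆ T → ltnPosInfluence w qp qm S ≤ ltnPosInfluence w qp qm T) ∧
    (∀ S T : Finset V, ∀ v : V, S ⊆ T → v ∉ T →
      ltnPosInfluence w qp qm (insert v T) - ltnPosInfluence w qp qm T ≤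
        ltnPosInfluence w qp qm (insert v S) - ltnPosInfluence w qp qm S) := by
  have key : ∀ S : Finset V, ltnPosInfluence w qp qm S
      = ∑ cfg : V → Option V × Option Bool,
          (∏ x, LTN.pw w x (cfg x).1 * LTN.pq qp qm x (cfg x).2) *
            ((Finset.univ.filter fun x =>
              (S ∩ LTN.Rset cfg (LTN.NN V) x).Nonempty).card : ℝ) :=
    fun S => LTN.influence_eq_cfg w qp qm S hw_nonneg hw_sum hqp hqm hr
  have hp0 : ∀ cfg : V → Option V × Option Bool,
      0 ≤ ∏ x, LTN.pw w x (cfg x).1 * LTN.pq qp qm x (cfg x).2 := by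
    intro cfg
    apply Finset.prod_nonneg
    intro x _
    exact mul_nonneg (LTN.pw_nonneg w hw_nonneg hw_sum x _)
      (LTN.pq_nonneg qp qm hqp hqm hr x _)
  have hmono : ∀ (cfg : V → Option V × Option Bool) (S T : Finset V), S ⊆ T →
      (Finset.univ.filter fun x => (S ∩ LTN.Rset cfg (LTN.NN V) x).Nonempty) ⊆
      (Finset.univ.filter fun x => (T ∩ LTN.Rset cfg (LTN.NN V) x).Nonempty) := by
    intro cfg S T hST x hx
    rw [Finset.mem_filter] at hx ⊢
    obtain ⟨y, hy⟩ := hx.2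
    rw [Finset.mem_inter] at hy
    exact ⟨hx.1, ⟨y, Finset.mem_inter.mpr ⟨hST hy.1, hy.2⟩⟩⟩
  constructor
  · intro S T hST
    rw [key S, key T]
    apply Finset.sum_le_sum
    intro cfg _
    apply mul_le_mul_of_nonneg_left _ (hp0 cfg)
    exact_mod_cast Finset.card_le_card (hmono cfg S T hST)
  · intro S T v hST hvT
    rw [key (insert v T), key T, key (insert v S), key S,
      ← Finset.sum_sub_distrib, ← Finset.sum_sub_distrib]
    apply Finset.sum_le_sum
    intro cfg _
    rw [← mul_sub, ← mul_sub]
    apply mul_le_mul_of_nonneg_left _ (hp0 cfg)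
    set R := fun x => LTN.Rset cfg (LTN.NN V) x with hR
    set A := Finset.univ.filter fun x => (S ∩ R x).Nonempty with hA
    set A' := Finset.univ.filter fun x => ((insert v S) ∩ R x).Nonempty with hA'
    set B := Finset.univ.filter fun x => (T ∩ R x).Nonempty with hB
    set B' := Finset.univ.filter fun x => ((insert v T) ∩ R x).Nonempty with hB'
    have hBB' : B ⊆ B' := hmono cfg T (insert v T) (Finset.subset_insert _ _)
    have hAA' : A ⊆ A' := hmono cfg S (insert v S) (Finset.subset_insert _ _)
    have hdiff : B' \ B ⊆ A' \ A := by
      intro x hx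
      rw [Finset.mem_sdiff] at hx ⊢
      obtain ⟨hx1, hx2⟩ := hx
      rw [hB', Finset.mem_filter] at hx1
      rw [hB, Finset.mem_filter] at hx2
      push_neg at hx2
      have hx2' := hx2 hx1.1
      obtain ⟨y, hy⟩ := hx1.2
      rw [Finset.mem_inter, Finset.mem_insert] at hy
      have hvR : v ∈ R x := by
        rcases hy.1 with rfl | hyT
        · exact hy.2
        · exfalso
          exact Finset.nonempty_iff_ne_empty.mp ⟨y, Finset.mem_inter.mpr ⟨hyT, hy.2⟩⟩ hx2'
      constructor
      · rw [hA', Finset.mem_filter]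
        exact ⟨Finset.mem_univ _,
          ⟨v, Finset.mem_inter.mpr ⟨Finset.mem_insert_self _ _, hvR⟩⟩⟩
      · rw [hA, Finset.mem_filter]
        rintro ⟨-, y', hy'⟩
        rw [Finset.mem_inter] at hy'
        exact Finset.nonempty_iff_ne_empty.mp ⟨y', Finset.mem_inter.mpr ⟨hST hy'.1, hy'.2⟩⟩ hx2'
    have e1 : ((B' \ B).card : ℝ) + B.card = B'.card := by
      exact_mod_cast congrArg (fun n : ℕ => (n : ℝ)) (Finset.card_sdiff_add_card_eq_card hBB')
    have e2 : ((A' \ A).card : ℝ) + A.card = A'.card := by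
      exact_mod_cast congrArg (fun n : ℕ => (n : ℝ)) (Finset.card_sdiff_add_card_eq_card hAA')
    have e3 : ((B' \ B).card : ℝ) ≤ ((A' \ A).card : ℝ) := by
      exact_mod_cast Finset.card_le_card hdiff
    linarith
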